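/- arXiv:1701.03561 — 3 statements merged into one kernel-verified Lean document; each statement's English description precedes it below -/
import Mathlib

section
/- Let λ/μ be a skew shape of length r with flagging f/g, and let 1 ≤ k ≤ r satisfy: μ_k < λ_k, g_k ≤ f_k, (g_k < g_{k+1} or k = r), and (μ_{k−1} > μ_k or k = 1). Let μ' be obtained from μ by replacing μ_k with μ_k + 1, and g' be obtained from g by replacing g_k with g_k + 1 (so f/g is a flagging of λ/μ' and f/g' is a flagging of λ/μ). Then G̃_{λ/μ,f/g} = x_{g_k}·G̃_{λ/μ',f/g} + (1+βx_{g_k})·G̃_{λ/μ,f/g'}. -/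
/- Common setup: `R = ℤ[β][[x₀,x₁,x₂,…]]` with `β = Polynomial.X`; only the
variables `x i` for `i ≥ 1` are used in the statements. -/

attribute [local instance] Classical.propDecidable

noncomputable section

abbrev A : Type := Polynomial ℤ
abbrev R : Type := MvPowerSeries ℕ A

/-- the element β -/
def bR : R := MvPowerSeries.C (σ := ℕ) (R := A) Polynomial.X

/-- the variable `x i` -/
def Xv (i : ℕ) : R := MvPowerSeries.X i

/-- total degree of a monomial -/
def degSum (d : ℕ →₀ ℕ) : ℕ := d.sum fun _ n => n

/-- the ring automorphism `s i` exchanging `x i` and `x (i+1)` -/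
def sOp (i : ℕ) (f : R) : R := fun d => f (Finsupp.equivMapDomain (Equiv.swap i (i+1)) d)

/-- the divided difference operator `π i`, characterized by
`(x i - x (i+1)) * π i f = (1 + β x (i+1)) f - (1 + β x i) (s i f)`. -/
def ddiff (i : ℕ) (f : R) : R :=
  Classical.epsilon fun gq : R =>
    (Xv i - Xv (i+1)) * gq = (1 + bR * Xv (i+1)) * f - (1 + bR * Xv i) * sOp i f

/-- complete homogeneous symmetric function of degree `j` in the variables `x_q, …, x_p` -/
def hsym (q p : ℕ) (j : ℤ) : R := fun d =>
  if (∀ k ∈ d.support, q ≤ k ∧ k ≤ p) ∧ (degSum d : ℤ) = j then 1 else 0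

/-- `∏_{i=q}^{p} (1 + β x_i)` -/
def prodOneAdd (q p : ℕ) : R := ∏ i ∈ Finset.Icc q p, (1 + bR * Xv i)

/-- `G_m^{[p/q]} = Σ_{s≥0} (−β)^s (∏_{i=q}^p (1+βx_i)) h_{m+s}(x_q,…,x_p)`,
defined coefficientwise (only the terms with `m + s ≤ deg d` can contribute to the
coefficient at a monomial `d`). -/
def Gsk (p q : ℕ) (m : ℤ) : R := fun d =>
  ∑ s ∈ Finset.range (((degSum d : ℤ) - m).toNat + 1),
    (-Polynomial.X : A) ^ s * MvPowerSeries.coeff (R := A) d (prodOneAdd q p * hsym q p (m + s))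

/-- `G_m^{[p]} = G_m^{[p/1]}` -/
def Gk (p : ℕ) (m : ℤ) : R := Gsk p 1 m

/-- the geometric series `Σ_{s≥0} (−β x_i)^s = 1/(1+βx_i)` -/
def geom (i : ℕ) : R := fun d =>
  if d.support ⊆ {i} then (-Polynomial.X : A) ^ (d i) else 0

/-- substitution of `x₁ = 0` -/
def setX1Zero (f : R) : R := fun d => if d 1 = 0 then f d else 0

/-- generalized binomial coefficient `C(c,s) = c(c−1)⋯(c−s+1)/s!` for `c : ℤ` -/
def intChoose (c : ℤ) (s : ℕ) : ℤ :=
  if 0 ≤ c then (c.toNat.choose s : ℤ) else (-1) ^ s * (((s : ℤ) - 1 - c).toNat.choose s : ℤ)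

/-- `Σ_{s≥0} C(c,s) β^s G_{m+s}^{[p/q]}`, defined coefficientwise. -/
def JT (p q : ℕ) (c m : ℤ) : R := fun d =>
  ∑ s ∈ Finset.range (((degSum d : ℤ) - m).toNat + 1),
    ((intChoose c s : ℤ) : A) * Polynomial.X ^ s * MvPowerSeries.coeff (R := A) d (Gsk p q (m + s))

/-- the Jacobi–Trudi type determinant `G̃_{λ/μ,f/g}` (rows and columns indexed by
`Fin r`, with `i : Fin r` representing the 1-based index `i+1`). -/
def GtildeSkew (r : ℕ) (lam mu f g : Fin r → ℕ) : R :=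
  Matrix.det (Matrix.of fun i j : Fin r =>
    JT (f i) (g j) ((i : ℤ) - (j : ℤ))
      ((lam i : ℤ) - (mu j : ℤ) + (j : ℤ) - (i : ℤ)))

/-- the Jacobi–Trudi type determinant `G̃_{λ,f}` -/
def Gtilde (r : ℕ) (lam f : Fin r → ℕ) : R :=
  GtildeSkew r lam (fun _ => 0) f (fun _ => 1)

/-- flagged skew set-valued tableaux of shape `λ/μ` with flagging `f/g`:
a tableau assigns to the box in row `i` (1-based index `i+1`), column `j`
(with `μᵢ < j ≤ λᵢ`) a nonempty subset of `{gᵢ,…,fᵢ}`, weakly increasing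
along rows and strictly increasing along columns; boxes outside the shape
carry `∅`. -/
def IsFSVT (r : ℕ) (lam mu f g : Fin r → ℕ) (T : Fin r × ℕ → Finset ℕ) : Prop :=
  (∀ (i : Fin r) (j : ℕ), ¬ (mu i < j ∧ j ≤ lam i) → T (i, j) = ∅) ∧
  (∀ (i : Fin r) (j : ℕ), mu i < j → j ≤ lam i → (T (i, j)).Nonempty) ∧
  (∀ (i : Fin r) (j k : ℕ), k ∈ T (i, j) → g i ≤ k ∧ k ≤ f i) ∧
  (∀ (i : Fin r) (j : ℕ), mu i < j → j + 1 ≤ lam i →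
     ∀ a ∈ T (i, j), ∀ b ∈ T (i, j + 1), a ≤ b) ∧
  (∀ (i : Fin r) (h : (i : ℕ) + 1 < r) (j : ℕ),
     mu i < j → j ≤ lam i → mu ⟨(i : ℕ) + 1, h⟩ < j → j ≤ lam ⟨(i : ℕ) + 1, h⟩ →
     ∀ a ∈ T (i, j), ∀ b ∈ T (⟨(i : ℕ) + 1, h⟩, j), a < b)

/-- the total number `|T|` of entries of a tableau -/
def entriesCount (r : ℕ) (lam mu : Fin r → ℕ) (T : Fin r × ℕ → Finset ℕ) : ℕ :=
  ∑ i : Fin r, ∑ j ∈ Finset.Ioc (mu i) (lam i), (T (i, j)).card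

/-- `|λ/μ|` -/
def shapeSize (r : ℕ) (lam mu : Fin r → ℕ) : ℕ := ∑ i : Fin r, (lam i - mu i)

/-- the weight `β^{|T|−|λ/μ|} ∏_{k∈T} x_k` of a tableau -/
def wt (r : ℕ) (lam mu : Fin r → ℕ) (T : Fin r × ℕ → Finset ℕ) : R :=
  bR ^ (entriesCount r lam mu T - shapeSize r lam mu) *
    ∏ i : Fin r, ∏ j ∈ Finset.Ioc (mu i) (lam i), ∏ k ∈ T (i, j), Xv k

/-- the flagged skew Grothendieck polynomial `G_{λ/μ,f/g}` as the (finite) sum of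
the weights of all flagged skew set-valued tableaux -/
def GF (r : ℕ) (lam mu f g : Fin r → ℕ) : R :=
  ∑ᶠ (T : Fin r × ℕ → Finset ℕ) (_ : IsFSVT r lam mu f g T), wt r lam mu T

/- permutations: `w ∈ S_n` is encoded as a permutation of `ℕ` fixing `0` and
everything `> n`. -/

/-- `w` belongs to `S_n` -/
def isSn (n : ℕ) (w : Equiv.Perm ℕ) : Prop := ∀ k, k = 0 ∨ n < k → w k = k

/-- Coxeter length = number of inversions -/
def len (n : ℕ) (w : Equiv.Perm ℕ) : ℕ :=
  (((Finset.Icc 1 n) ×ˢ (Finset.Icc 1 n)).filter fun pr : ℕ × ℕ =>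
    pr.1 < pr.2 ∧ w pr.2 < w pr.1).card

/-- the rank function `r_w(p,q) = #{i ≤ p : w(i) ≤ q}` -/
def rankf (w : Equiv.Perm ℕ) (p q : ℕ) : ℕ :=
  ((Finset.Icc 1 p).filter fun i => w i ≤ q).card

/-- the diagram `D(w)` -/
def inD (n : ℕ) (w : Equiv.Perm ℕ) (p q : ℕ) : Prop :=
  1 ≤ p ∧ p ≤ n ∧ 1 ≤ q ∧ q ≤ n ∧ q < w p ∧ p < w.symm q

/-- the essential set `Ess(w)` -/
def inEss (n : ℕ) (w : Equiv.Perm ℕ) (p q : ℕ) : Prop :=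
  inD n w p q ∧ ¬ inD n w (p+1) q ∧ ¬ inD n w p (q+1)

/-- `w ∈ S_n` is vexillary: it avoids the pattern 2143 -/
def Vexillary (n : ℕ) (w : Equiv.Perm ℕ) : Prop :=
  ¬ ∃ a b c d : ℕ, 1 ≤ a ∧ a < b ∧ b < c ∧ c < d ∧ d ≤ n ∧
      w b < w a ∧ w a < w d ∧ w d < w c

-- === auxiliary lemmas for stmt14 ===
namespace Stmt14Aux

open MvPowerSeries Finset

lemma degSum_add (a b : ℕ →₀ ℕ) : degSum (a + b) = degSum a + degSum b := by
  simpa [degSum] using Finsupp.sum_add_index' (f := a) (g := b) (h := fun _ n => n)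
    (fun _ => rfl) (fun _ _ _ => rfl)

lemma apply_le_degSum (d : ℕ →₀ ℕ) (q : ℕ) : d q ≤ degSum d := by
  by_cases h : d q = 0
  · simp [h]
  · exact Finset.single_le_sum (f := fun k => d k) (fun _ _ => Nat.zero_le _)
      (Finsupp.mem_support_iff.2 h)

lemma degSum_single (q : ℕ) : degSum (Finsupp.single q 1) = 1 := by
  simp [degSum]

lemma degSum_zero : degSum 0 = 0 := by simp [degSum]

lemma degSum_eq_zero {d : ℕ →₀ ℕ} (h : degSum d = 0) : d = 0 := by
  ext a
  have := apply_le_degSum d a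
  simp only [Finsupp.coe_zero, Pi.zero_apply]
  omega

lemma sub_single_add {d : ℕ →₀ ℕ} {q : ℕ} (h : d q ≠ 0) :
    d - Finsupp.single q 1 + Finsupp.single q 1 = d := by
  apply tsub_add_cancel_of_le
  exact Finsupp.single_le_iff.2 (Nat.one_le_iff_ne_zero.2 h)

lemma degSum_sub_single {d : ℕ →₀ ℕ} {q : ℕ} (h : d q ≠ 0) :
    degSum (d - Finsupp.single q 1) + 1 = degSum d := by
  conv_rhs => rw [← sub_single_add h]
  rw [degSum_add, degSum_single]

lemma coeff_X_mul (q : ℕ) (F : R) (d : ℕ →₀ ℕ) :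
    MvPowerSeries.coeff (R := A) d (Xv q * F) =
      if d q = 0 then 0 else MvPowerSeries.coeff (R := A) (d - Finsupp.single q 1) F := by
  rw [Xv, MvPowerSeries.X, MvPowerSeries.coeff_monomial_mul]
  by_cases h : d q = 0
  · rw [if_pos h, if_neg]
    simp [Finsupp.single_le_iff, h]
  · rw [if_neg h, if_pos (Finsupp.single_le_iff.2 (Nat.one_le_iff_ne_zero.2 h)), one_mul]

lemma coeff_oneadd_mul (q : ℕ) (F : R) (d : ℕ →₀ ℕ) :
    MvPowerSeries.coeff (R := A) d ((1 + bR * Xv q) * F) =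
      MvPowerSeries.coeff (R := A) d F + Polynomial.X * MvPowerSeries.coeff (R := A) d (Xv q * F) := by
  rw [add_mul, one_mul, map_add, mul_assoc, bR, MvPowerSeries.coeff_C_mul]

lemma hsym_coeff (q p : ℕ) (j : ℤ) (d : ℕ →₀ ℕ) :
    MvPowerSeries.coeff (R := A) d (hsym q p j) =
      if (∀ k ∈ d.support, q ≤ k ∧ k ≤ p) ∧ (degSum d : ℤ) = j then 1 else 0 := rfl

lemma Gsk_coeff (p q : ℕ) (m : ℤ) (d : ℕ →₀ ℕ) :
    MvPowerSeries.coeff (R := A) d (Gsk p q m) =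
      ∑ s ∈ Finset.range (((degSum d : ℤ) - m).toNat + 1),
        (-Polynomial.X : A) ^ s *
          MvPowerSeries.coeff (R := A) d (prodOneAdd q p * hsym q p (m + s)) := rfl

lemma JT_coeff (p q : ℕ) (c m : ℤ) (d : ℕ →₀ ℕ) :
    MvPowerSeries.coeff (R := A) d (JT p q c m) =
      ∑ s ∈ Finset.range (((degSum d : ℤ) - m).toNat + 1),
        ((intChoose c s : ℤ) : A) * Polynomial.X ^ s *
          MvPowerSeries.coeff (R := A) d (Gsk p q (m + s)) := rfl

lemma hsym_rec {q p : ℕ} (hqp : q ≤ p) (j : ℤ) :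
    hsym q p j = Xv q * hsym q p (j-1) + hsym (q+1) p j := by
  apply MvPowerSeries.ext; intro d
  rw [map_add, coeff_X_mul]
  by_cases h : d q = 0
  · rw [if_pos h, zero_add, hsym_coeff, hsym_coeff]
    apply if_congr _ rfl rfl
    constructor
    · rintro ⟨hs, hd⟩
      refine ⟨fun k hk => ?_, hd⟩
      rcases hs k hk with ⟨h1, h2⟩
      have hkq : k ≠ q := by
        intro he; rw [he] at hk; exact (Finsupp.mem_support_iff.1 hk) h
      exact ⟨by omega, h2⟩
    · rintro ⟨hs, hd⟩
      exact ⟨fun k hk => ⟨by have := (hs k hk).1; omega, (hs k hk).2⟩, hd⟩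
  · rw [if_neg h]
    have hq : q ∈ d.support := Finsupp.mem_support_iff.2 h
    have hzero : MvPowerSeries.coeff (R := A) d (hsym (q+1) p j) = 0 := by
      rw [hsym_coeff]
      apply if_neg
      rintro ⟨hc, -⟩
      have := (hc q hq).1
      omega
    rw [hzero, add_zero, hsym_coeff, hsym_coeff]
    have hdeg : degSum (d - Finsupp.single q 1) + 1 = degSum d := degSum_sub_single h
    apply if_congr _ rfl rfl
    constructor
    · rintro ⟨hs, hd⟩
      refine ⟨fun k hk => ?_, by omega⟩
      apply hs
      rw [Finsupp.mem_support_iff] at hk ⊢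
      intro h0
      apply hk
      rw [Finsupp.tsub_apply, h0]
      exact Nat.zero_sub _
    · rintro ⟨hs, hd⟩
      refine ⟨fun k hk => ?_, by omega⟩
      by_cases hkq : k = q
      · exact ⟨le_of_eq hkq.symm, hkq ▸ hqp⟩
      · apply hs
        rw [Finsupp.mem_support_iff, Finsupp.tsub_apply, Finsupp.single_apply,
          if_neg (fun he => hkq he.symm)]
        simpa using Finsupp.mem_support_iff.1 hk

lemma prod_rec {q p : ℕ} (hqp : q ≤ p) :
    prodOneAdd q p = (1 + bR * Xv q) * prodOneAdd (q+1) p := by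
  rw [prodOneAdd, prodOneAdd, Finset.Icc_eq_cons_Ioc hqp, Finset.prod_cons, Finset.Icc_add_one_left_eq_Ioc]

lemma prod_empty {q p : ℕ} (h : p < q) : prodOneAdd q p = 1 := by
  rw [prodOneAdd, Finset.Icc_eq_empty (by omega), Finset.prod_empty]

lemma coeff_prod_hsym_eq_zero {q p : ℕ} {j : ℤ} {d : ℕ →₀ ℕ} (h : (degSum d : ℤ) < j) :
    MvPowerSeries.coeff (R := A) d (prodOneAdd q p * hsym q p j) = 0 := by
  rw [MvPowerSeries.coeff_mul]
  apply Finset.sum_eq_zero; intro x hx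
  have h2 : x.1 + x.2 = d := Finset.HasAntidiagonal.mem_antidiagonal.mp hx
  have hle : degSum x.2 ≤ degSum d := by rw [← h2, degSum_add]; omega
  rw [hsym_coeff, if_neg, mul_zero]
  rintro ⟨-, hc⟩
  omega

lemma Gsk_eval_zero {p q : ℕ} {m : ℤ} {d : ℕ →₀ ℕ} (h : (degSum d : ℤ) < m) :
    MvPowerSeries.coeff (R := A) d (Gsk p q m) = 0 := by
  rw [Gsk_coeff]
  apply Finset.sum_eq_zero; intro s _
  rw [coeff_prod_hsym_eq_zero (by omega), mul_zero]

lemma hsym_empty_coeff {q p : ℕ} (h : p < q) (j : ℤ) (d : ℕ →₀ ℕ) :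
    MvPowerSeries.coeff (R := A) d (hsym q p j) = if d = 0 ∧ j = 0 then 1 else 0 := by
  rw [hsym_coeff]
  apply if_congr _ rfl rfl
  constructor
  · rintro ⟨hs, hd⟩
    have hd0 : d = 0 := by
      by_contra hne
      obtain ⟨a, ha⟩ : ∃ a, d a ≠ 0 := by
        by_contra hall; push_neg at hall; exact hne (Finsupp.ext fun a => hall a)
      have := hs a (Finsupp.mem_support_iff.2 ha)
      omega
    subst hd0
    simp only [degSum_zero] at hd
    exact ⟨rfl, by omega⟩
  · rintro ⟨hd0, hj⟩
    subst hd0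
    exact ⟨fun k hk => by simp at hk, by simp [degSum_zero, hj]⟩

lemma Gsk_empty_coeff {q p : ℕ} (h : p < q) (m : ℤ) (d : ℕ →₀ ℕ) :
    MvPowerSeries.coeff (R := A) d (Gsk p q m) =
      if d = 0 ∧ m ≤ 0 then (-Polynomial.X) ^ (-m).toNat else 0 := by
  rw [Gsk_coeff]
  by_cases hd : d = 0
  · subst hd
    simp only [degSum_zero, prod_empty h, one_mul, hsym_empty_coeff h, Nat.cast_zero, zero_sub]
    by_cases hm : m ≤ 0
    · rw [if_pos ⟨by trivial, hm⟩]
      rw [Finset.sum_eq_single ((-m).toNat)]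
      · rw [if_pos ⟨by trivial, by omega⟩, mul_one]
      · intro s _ hs
        rw [if_neg, mul_zero]
        rintro ⟨-, he⟩
        omega
      · intro hc
        exact absurd (Finset.self_mem_range_succ _) hc
    · rw [if_neg (fun hc => hm hc.2)]
      apply Finset.sum_eq_zero; intro s _
      rw [if_neg, mul_zero]
      rintro ⟨-, he⟩
      omega
  · rw [if_neg (fun hc => hd hc.1)]
    apply Finset.sum_eq_zero; intro s _
    rw [prod_empty h, one_mul, hsym_empty_coeff h, if_neg (fun hc => hd hc.1), mul_zero]

lemma JT_empty_pos {p q : ℕ} (h : p < q) (c : ℤ) {m : ℤ} (hm : 1 ≤ m) :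
    JT p q c m = 0 := by
  apply MvPowerSeries.ext; intro d
  rw [map_zero, JT_coeff]
  apply Finset.sum_eq_zero; intro s _
  rw [Gsk_empty_coeff h, if_neg (by rintro ⟨-, hc⟩; omega), mul_zero]

lemma JT_empty_coeff {p q : ℕ} (h : p < q) (c : ℤ) {m : ℤ} (hm : m ≤ 0) (d : ℕ →₀ ℕ) :
    MvPowerSeries.coeff (R := A) d (JT p q c m) =
      if d = 0 then
        ∑ s ∈ Finset.range ((-m).toNat + 1),
          ((intChoose c s : ℤ) : A) * Polynomial.X ^ s * (-Polynomial.X) ^ ((-m).toNat - s)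
      else 0 := by
  rw [JT_coeff]
  by_cases hd : d = 0
  · subst hd
    rw [if_pos rfl]
    simp only [degSum_zero, Nat.cast_zero, zero_sub]
    apply Finset.sum_congr rfl
    intro s hs
    rw [Finset.mem_range] at hs
    rw [Gsk_empty_coeff h, if_pos ⟨rfl, by omega⟩]
    congr 2
    omega
  · rw [if_neg hd]
    apply Finset.sum_eq_zero; intro s _
    rw [Gsk_empty_coeff h, if_neg (fun hc => hd hc.1), mul_zero]

lemma prod_hsym_rec {q p : ℕ} (hqp : q ≤ p) (j : ℤ) :
    prodOneAdd q p * hsym q p j =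
      Xv q * (prodOneAdd q p * hsym q p (j-1)) +
      (1 + bR * Xv q) * (prodOneAdd (q+1) p * hsym (q+1) p j) := by
  rw [hsym_rec hqp j, prod_rec hqp]; ring

lemma Gsk_rec {q p : ℕ} (hqp : q ≤ p) (m : ℤ) :
    Gsk p q m = Xv q * Gsk p q (m-1) + (1 + bR * Xv q) * Gsk p (q+1) m := by
  apply MvPowerSeries.ext; intro d
  rw [map_add, coeff_X_mul, coeff_oneadd_mul, coeff_X_mul, Gsk_coeff]
  by_cases h : d q = 0
  · rw [if_pos h, if_pos h, zero_add, mul_zero, add_zero, Gsk_coeff]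
    apply Finset.sum_congr rfl
    intro s _
    congr 1
    rw [prod_hsym_rec hqp (m + s), map_add, coeff_X_mul, if_pos h, zero_add,
      coeff_oneadd_mul, coeff_X_mul, if_pos h, mul_zero, add_zero]
  · rw [if_neg h, if_neg h]
    have hdeg : degSum (d - Finsupp.single q 1) + 1 = degSum d := degSum_sub_single h
    have hS1 : ((degSum (d - Finsupp.single q 1) : ℤ) - (m - 1)).toNat
        = ((degSum d : ℤ) - m).toNat := by
      congr 1; push_cast; omega
    have hext : MvPowerSeries.coeff (R := A) (d - Finsupp.single q 1) (Gsk p (q+1) m) =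
        ∑ s ∈ Finset.range (((degSum d : ℤ) - m).toNat + 1),
          (-Polynomial.X : A) ^ s *
            MvPowerSeries.coeff (R := A) (d - Finsupp.single q 1)
              (prodOneAdd (q+1) p * hsym (q+1) p (m + s)) := by
      rw [Gsk_coeff]
      apply Finset.sum_subset
      · apply Finset.range_subset_range.2
        have h1 : (degSum (d - Finsupp.single q 1) : ℤ) - m ≤ (degSum d : ℤ) - m := by
          push_cast; omega
        have := Int.toNat_le_toNat h1
        omega
      · intro s hs1 hs
        rw [Finset.mem_range, not_lt] at hs
        have h1 : (degSum (d - Finsupp.single q 1) : ℤ) - m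
            ≤ (((degSum (d - Finsupp.single q 1) : ℤ) - m)).toNat := Int.self_le_toNat _
        rw [coeff_prod_hsym_eq_zero (by omega), mul_zero]
    rw [Gsk_coeff, hS1, Gsk_coeff, hext, Finset.mul_sum, ← Finset.sum_add_distrib,
      ← Finset.sum_add_distrib]
    apply Finset.sum_congr rfl
    intro s _
    rw [prod_hsym_rec hqp (m + s), map_add, coeff_X_mul, if_neg h, coeff_oneadd_mul,
      coeff_X_mul, if_neg h, show m - 1 + (s:ℤ) = m + (s:ℤ) - 1 from by ring]
    ring

lemma JT_rec {q p : ℕ} (hqp : q ≤ p) (c m : ℤ) :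
    JT p q c m = Xv q * JT p q c (m-1) + (1 + bR * Xv q) * JT p (q+1) c m := by
  apply MvPowerSeries.ext; intro d
  rw [map_add, coeff_X_mul, coeff_oneadd_mul, coeff_X_mul, JT_coeff]
  by_cases h : d q = 0
  · rw [if_pos h, if_pos h, zero_add, mul_zero, add_zero, JT_coeff]
    apply Finset.sum_congr rfl
    intro s _
    refine congrArg (((intChoose c s : ℤ) : A) * Polynomial.X ^ s * ·) ?_
    rw [Gsk_rec hqp (m + s), map_add, coeff_X_mul, if_pos h, zero_add,
      coeff_oneadd_mul, coeff_X_mul, if_pos h, mul_zero, add_zero]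
  · rw [if_neg h, if_neg h]
    have hdeg : degSum (d - Finsupp.single q 1) + 1 = degSum d := degSum_sub_single h
    have hS1 : ((degSum (d - Finsupp.single q 1) : ℤ) - (m - 1)).toNat
        = ((degSum d : ℤ) - m).toNat := by
      congr 1; push_cast; omega
    have hext : MvPowerSeries.coeff (R := A) (d - Finsupp.single q 1) (JT p (q+1) c m) =
        ∑ s ∈ Finset.range (((degSum d : ℤ) - m).toNat + 1),
          ((intChoose c s : ℤ) : A) * Polynomial.X ^ s *
            MvPowerSeries.coeff (R := A) (d - Finsupp.single q 1) (Gsk p (q+1) (m + s)) := by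
      rw [JT_coeff]
      apply Finset.sum_subset
      · apply Finset.range_subset_range.2
        have h1 : (degSum (d - Finsupp.single q 1) : ℤ) - m ≤ (degSum d : ℤ) - m := by
          push_cast; omega
        have := Int.toNat_le_toNat h1
        omega
      · intro s hs1 hs
        rw [Finset.mem_range, not_lt] at hs
        have h1 : (degSum (d - Finsupp.single q 1) : ℤ) - m
            ≤ (((degSum (d - Finsupp.single q 1) : ℤ) - m)).toNat := Int.self_le_toNat _
        rw [Gsk_eval_zero (by omega), mul_zero]
    rw [JT_coeff, hS1, JT_coeff, hext, Finset.mul_sum, ← Finset.sum_add_distrib,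
      ← Finset.sum_add_distrib]
    apply Finset.sum_congr rfl
    intro s _
    rw [Gsk_rec hqp (m + s), map_add, coeff_X_mul, if_neg h, coeff_oneadd_mul,
      coeff_X_mul, if_neg h, show m - 1 + (s:ℤ) = m + (s:ℤ) - 1 from by ring]
    ring

lemma JT_rec_empty_pos {q p : ℕ} (h : p < q) (c : ℤ) {m : ℤ} (hm : 2 ≤ m) :
    JT p q c m = Xv q * JT p q c (m-1) + (1 + bR * Xv q) * JT p (q+1) c m := by
  rw [JT_empty_pos h c (by omega : (1:ℤ) ≤ m), JT_empty_pos h c (by omega : (1:ℤ) ≤ m - 1),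
    JT_empty_pos (by omega : p < q + 1) c (by omega : (1:ℤ) ≤ m)]
  ring

lemma JT_rec_empty_neg {q p : ℕ} (h : p < q) {c m : ℤ} (hc : 1 ≤ c) (hm : m ≤ -c) :
    JT p q c m = Xv q * JT p q c (m-1) + (1 + bR * Xv q) * JT p (q+1) c m := by
  have hm0 : m ≤ 0 := by omega
  have hm1 : m - 1 ≤ 0 := by omega
  have h1 : p < q + 1 := by omega
  have hN : (-(m-1)).toNat = (-m).toNat + 1 := by omega
  have key : (∑ s ∈ Finset.range ((-m).toNat + 1 + 1),
        ((intChoose c s : ℤ) : A) * Polynomial.X ^ s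
          * (-Polynomial.X) ^ ((-m).toNat + 1 - s))
      + Polynomial.X * (∑ s ∈ Finset.range ((-m).toNat + 1),
        ((intChoose c s : ℤ) : A) * Polynomial.X ^ s
          * (-Polynomial.X) ^ ((-m).toNat - s)) = 0 := by
    rw [Finset.sum_range_succ]
    have hz : intChoose c ((-m).toNat + 1) = 0 := by
      rw [intChoose, if_pos (by omega)]
      norm_cast
      apply Nat.choose_eq_zero_of_lt
      omega
    rw [hz]
    push_cast
    rw [zero_mul, zero_mul, add_zero, Finset.mul_sum, ← Finset.sum_add_distrib]
    apply Finset.sum_eq_zero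
    intro s hs
    rw [Finset.mem_range] at hs
    rw [show (-m).toNat + 1 - s = ((-m).toNat - s) + 1 from by omega, pow_succ]
    ring
  apply MvPowerSeries.ext; intro d
  rw [map_add, coeff_X_mul, coeff_oneadd_mul, coeff_X_mul,
    JT_empty_coeff h c hm0, JT_empty_coeff h c hm1, JT_empty_coeff h1 c hm0,
    JT_empty_coeff h1 c hm0]
  by_cases hq : d q = 0
  · rw [if_pos hq, if_pos hq, mul_zero, add_zero, zero_add]
  · rw [if_neg hq, if_neg hq]
    have hd0 : d ≠ 0 := fun he => hq (by rw [he]; rfl)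
    rw [if_neg hd0]
    by_cases he : d - Finsupp.single q 1 = 0
    · rw [if_pos he, if_pos he, hN]
      linear_combination -key
    · rw [if_neg he, if_neg he]
      ring

lemma f_chain {r : ℕ} (lam mu f g : Fin r → ℕ)
    (hlam_anti : ∀ i j : Fin r, i ≤ j → lam j ≤ lam i)
    (hmu_anti : ∀ i j : Fin r, i ≤ j → mu j ≤ mu i)
    (hflag : ∀ (i : Fin r) (h : (i : ℕ) + 1 < r), mu i < lam ⟨(i : ℕ) + 1, h⟩ →
      g i ≤ g ⟨(i : ℕ) + 1, h⟩ ∧ f i ≤ f ⟨(i : ℕ) + 1, h⟩)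
    (k : Fin r) :
    ∀ n (h : (k : ℕ) + n < r), mu k < lam ⟨(k : ℕ) + n, h⟩ → f k ≤ f ⟨(k : ℕ) + n, h⟩ := by
  intro n
  induction n with
  | zero =>
    intro h _
    have he : (⟨(k:ℕ)+0, h⟩ : Fin r) = k := Fin.ext (by simp)
    rw [he]
  | succ n ih =>
    intro h hlt
    have hn : (k:ℕ) + n < r := by omega
    have hle : (⟨(k:ℕ)+n, hn⟩ : Fin r) ≤ ⟨(k:ℕ)+n+1, h⟩ :=
      Fin.le_def.2 (Nat.le_succ _)
    have h1 : mu k < lam ⟨(k:ℕ)+n, hn⟩ := lt_of_lt_of_le hlt (hlam_anti _ _ hle)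
    have h2 := ih hn h1
    have hmuk : mu ⟨(k:ℕ)+n, hn⟩ ≤ mu k := hmu_anti k _ (Fin.le_def.2 (Nat.le_add_right _ _))
    have h3 := hflag ⟨(k:ℕ)+n, hn⟩ (by show (k:ℕ)+n+1 < r; omega) (lt_of_le_of_lt hmuk hlt)
    exact le_trans h2 h3.2

end Stmt14Aux

theorem stmt14 (r : ℕ) (lam mu f g : Fin r → ℕ)
    (hlam_anti : ∀ i j : Fin r, i ≤ j → lam j ≤ lam i) (hlam_pos : ∀ i, 0 < lam i)
    (hmu_anti : ∀ i j : Fin r, i ≤ j → mu j ≤ mu i) (hmule : ∀ i, mu i ≤ lam i)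
    (hf_pos : ∀ i, 0 < f i) (hg_pos : ∀ i, 0 < g i)
    (hflag : ∀ (i : Fin r) (h : (i : ℕ) + 1 < r), mu i < lam ⟨(i : ℕ) + 1, h⟩ →
      g i ≤ g ⟨(i : ℕ) + 1, h⟩ ∧ f i ≤ f ⟨(i : ℕ) + 1, h⟩)
    (k : Fin r)
    (h1 : mu k < lam k) (h2 : g k ≤ f k)
    (h3 : ∀ h : (k : ℕ) + 1 < r, g k < g ⟨(k : ℕ) + 1, h⟩)
    (h4 : ∀ _ : 0 < (k : ℕ),
      mu k < mu ⟨(k : ℕ) - 1, Nat.lt_of_le_of_lt (Nat.sub_le _ _) k.isLt⟩) :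
    GtildeSkew r lam mu f g =
      Xv (g k) * GtildeSkew r lam (Function.update mu k (mu k + 1)) f g +
      (1 + bR * Xv (g k)) * GtildeSkew r lam mu f (Function.update g k (g k + 1)) := by
  classical
  have entry : ∀ i : Fin r,
      JT (f i) (g k) ((i:ℤ) - (k:ℤ)) ((lam i : ℤ) - (mu k : ℤ) + (k:ℤ) - (i:ℤ)) =
        Xv (g k) * JT (f i) (g k) ((i:ℤ) - (k:ℤ))
          ((lam i : ℤ) - (mu k : ℤ) + (k:ℤ) - (i:ℤ) - 1) +
        (1 + bR * Xv (g k)) * JT (f i) (g k + 1) ((i:ℤ) - (k:ℤ))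
          ((lam i : ℤ) - (mu k : ℤ) + (k:ℤ) - (i:ℤ)) := by
    intro i
    rcases le_or_gt (g k) (f i) with hle | hgt
    · exact Stmt14Aux.JT_rec hle _ _
    · rcases lt_trichotomy (i : ℕ) (k : ℕ) with hik | hik | hik
      · have hfle : i ≤ k := Fin.le_def.2 hik.le
        have hlk : lam k ≤ lam i := hlam_anti i k hfle
        exact Stmt14Aux.JT_rec_empty_pos hgt _ (by omega)
      · exact absurd ((Fin.ext hik : i = k) ▸ h2) (not_le.2 hgt)
      · have hmula : lam i ≤ mu k := by
          by_contra hcon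
          push_neg at hcon
          have hkn : (k : ℕ) + ((i:ℕ) - (k:ℕ)) < r := by omega
          have hieq : (⟨(k : ℕ) + ((i:ℕ) - (k:ℕ)), hkn⟩ : Fin r) = i := Fin.ext (by simp; omega)
          have := Stmt14Aux.f_chain lam mu f g hlam_anti hmu_anti hflag k
            ((i:ℕ) - (k:ℕ)) hkn (by rw [hieq]; exact hcon)
          rw [hieq] at this
          omega
        exact Stmt14Aux.JT_rec_empty_neg hgt (by omega) (by omega)
  rw [GtildeSkew, GtildeSkew, GtildeSkew]
  set M : Matrix (Fin r) (Fin r) R := Matrix.of fun i j : Fin r =>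
    JT (f i) (g j) ((i : ℤ) - (j : ℤ))
      ((lam i : ℤ) - (mu j : ℤ) + (j : ℤ) - (i : ℤ)) with hMdef
  set col1 : Fin r → R := fun i => JT (f i) (g k) ((i:ℤ) - (k:ℤ))
      ((lam i : ℤ) - (mu k : ℤ) + (k:ℤ) - (i:ℤ) - 1) with hcol1
  set col2 : Fin r → R := fun i => JT (f i) (g k + 1) ((i:ℤ) - (k:ℤ))
      ((lam i : ℤ) - (mu k : ℤ) + (k:ℤ) - (i:ℤ)) with hcol2
  have hupdate_mu : (Matrix.of fun i j : Fin r =>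
      JT (f i) (g j) ((i : ℤ) - (j : ℤ))
        ((lam i : ℤ) - ((Function.update mu k (mu k + 1)) j : ℤ) + (j : ℤ) - (i : ℤ)))
      = M.updateCol k col1 := by
    funext i j
    simp only [hMdef, Matrix.of_apply, Matrix.updateCol_apply, hcol1]
    by_cases hj : j = k
    · subst hj
      rw [if_pos rfl, Function.update_self]
      congr 1
      push_cast
      ring
    · rw [if_neg hj, Function.update_of_ne hj]
  have hupdate_g : (Matrix.of fun i j : Fin r =>
      JT (f i) ((Function.update g k (g k + 1)) j) ((i : ℤ) - (j : ℤ))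
        ((lam i : ℤ) - (mu j : ℤ) + (j : ℤ) - (i : ℤ)))
      = M.updateCol k col2 := by
    funext i j
    simp only [hMdef, Matrix.of_apply, Matrix.updateCol_apply, hcol2]
    by_cases hj : j = k
    · subst hj
      rw [if_pos rfl, Function.update_self]
    · rw [if_neg hj, Function.update_of_ne hj]
  have hcolstep : M = M.updateCol k
      (Xv (g k) • col1 + (1 + bR * Xv (g k)) • col2) := by
    funext i j
    simp only [hMdef, Matrix.of_apply, Matrix.updateCol_apply, Pi.add_apply,
      Pi.smul_apply, smul_eq_mul, hcol1, hcol2]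
    by_cases hj : j = k
    · rw [if_pos hj]
      subst hj
      exact entry i
    · rw [if_neg hj]
  rw [hupdate_mu, hupdate_g]
  conv_lhs => rw [hcolstep]
  rw [Matrix.det_updateCol_add, Matrix.det_updateCol_smul, Matrix.det_updateCol_smul]


end
end

section
/- Let λ/μ be a skew shape of length r with flagging f/g, and let 1 ≤ k ≤ r satisfy: μ_k < λ_k, g_k ≤ f_k, (g_k < g_{k+1} or k = r), and (μ_{k−1} > μ_k or k = 1). Let μ' be obtained from μ by replacing μ_k with μ_k + 1, and g' be obtained from g by replacing g_k with g_k + 1 (so f/g is a flagging of λ/μ' and f/g' is a flagging of λ/μ). Then G_{λ/μ,f/g} = x_{g_k}·G_{λ/μ',f/g} + (1+βx_{g_k})·G_{λ/μ,f/g'}. -/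
/- Common setup: `R = ℤ[β][[x₀,x₁,x₂,…]]` with `β = Polynomial.X`; only the
variables `x i` for `i ≥ 1` are used in the statements. -/

attribute [local instance] Classical.propDecidable

noncomputable section

section AuxStmt15
variable {r : ℕ} {lam mu f g : Fin r → ℕ} {k : Fin r}

lemma fsvt_finite (r : ℕ) (lam mu f g : Fin r → ℕ) : {T | IsFSVT r lam mu f g T}.Finite := by
  classical
  set L := (Finset.univ.sup lam) + 1 with hL
  set N := (Finset.univ.sup f) + 1 with hN
  set F : ((Fin r × Fin L) → Finset (Fin N)) → (Fin r × ℕ → Finset ℕ) :=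
    fun u p => if h : p.2 < L then (u (p.1, ⟨p.2, h⟩)).image Fin.val else ∅ with hF
  apply Set.Finite.subset (Set.finite_range F)
  rintro T hT
  refine ⟨fun q => Finset.univ.filter (fun m : Fin N => (m : ℕ) ∈ T (q.1, (q.2 : ℕ))), ?_⟩
  funext p
  obtain ⟨i, j⟩ := p
  by_cases h : j < L
  · simp only [hF, dif_pos h]
    ext m
    simp only [Finset.mem_image, Finset.mem_filter, Finset.mem_univ, true_and]
    constructor
    · rintro ⟨m', hm', rfl⟩; exact hm'
    · intro hm
      have hmN : m < N := by
        have := (hT.2.2.1 i j m hm).2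
        have : f i ≤ Finset.univ.sup f := Finset.le_sup (Finset.mem_univ i)
        omega
      exact ⟨⟨m, hmN⟩, hm, rfl⟩
  · simp only [hF, dif_neg h]
    refine (hT.1 i j ?_).symm
    have : lam i ≤ Finset.univ.sup lam := Finset.le_sup (Finset.mem_univ i)
    omega

lemma chain_row {r : ℕ} {lam mu f g : Fin r → ℕ} {T : Fin r × ℕ → Finset ℕ}
    (hT : IsFSVT r lam mu f g T) (i : Fin r) {m0 : ℕ} (hm0 : m0 ∈ T (i, mu i + 1)) :
    ∀ j, mu i + 2 ≤ j → j ≤ lam i → ∀ m ∈ T (i, j), m0 ≤ m := by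
  intro j hj
  induction j, hj using Nat.le_induction with
  | base =>
    intro hle m hm
    have := hT.2.2.2.1 i (mu i + 1) (by omega) (by omega) m0 hm0 m
    apply this
    have h2 : mu i + 1 + 1 = mu i + 2 := by omega
    rw [h2]; exact hm
  | succ n hn ih =>
    intro hle m hm
    obtain ⟨c, hc⟩ := hT.2.1 i n (by omega) (by omega)
    exact le_trans (ih (by omega) c hc) (hT.2.2.2.1 i n (by omega) hle c hc m hm)

lemma ec_ge {r : ℕ} {lam mu f g : Fin r → ℕ} {T : Fin r × ℕ → Finset ℕ}
    (hT : IsFSVT r lam mu f g T) : shapeSize r lam mu ≤ entriesCount r lam mu T := by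
  unfold shapeSize entriesCount
  apply Finset.sum_le_sum
  intro i _
  calc lam i - mu i = ∑ j ∈ Finset.Ioc (mu i) (lam i), 1 := by
        simp [Nat.card_Ioc]
    _ ≤ _ := by
        apply Finset.sum_le_sum
        intro j hj
        rw [Finset.mem_Ioc] at hj
        exact Finset.card_pos.mpr (hT.2.1 i j hj.1 hj.2)

lemma Ioc_split {a c : ℕ} (h : a < c) :
    Finset.Ioc a c = insert (a+1) (Finset.Ioc (a+1) c) := by
  ext x; simp only [Finset.mem_Ioc, Finset.mem_insert]; omega

lemma wt_case1 {r : ℕ} (lam mu : Fin r → ℕ) (k : Fin r) (h1 : mu k < lam k)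
    {T : Fin r × ℕ → Finset ℕ} (gk : ℕ) (hb : T (k, mu k + 1) = {gk}) :
    wt r lam mu T =
      Xv gk * wt r lam (Function.update mu k (mu k + 1))
        (Function.update T (k, mu k + 1) ∅) := by
  classical
  set mu' := Function.update mu k (mu k + 1) with hmu'
  set T' := Function.update T (k, mu k + 1) ∅ with hT'
  have hmu'k : mu' k = mu k + 1 := Function.update_self _ _ _
  have hmu'ne : ∀ i : Fin r, i ≠ k → mu' i = mu i := fun i hi =>
    Function.update_of_ne hi _ _
  have hT'ne : ∀ (i : Fin r) (j : ℕ), (i, j) ≠ (k, mu k + 1) → T' (i, j) = T (i, j) :=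
    fun i j hij => Function.update_of_ne hij _ _
  have hnm : (mu k + 1) ∉ Finset.Ioc (mu k + 1) (lam k) := by simp
  -- entries count
  have hrow : ∀ i ∈ Finset.univ.erase k,
      (∑ j ∈ Finset.Ioc (mu i) (lam i), (T (i, j)).card)
        = ∑ j ∈ Finset.Ioc (mu' i) (lam i), (T' (i, j)).card := by
    intro i hi
    have hik : i ≠ k := (Finset.mem_erase.mp hi).1
    rw [hmu'ne i hik]
    refine Finset.sum_congr rfl fun j _ => ?_
    rw [hT'ne i j (by simp [hik])]
  have hrowk : (∑ j ∈ Finset.Ioc (mu k) (lam k), (T (k, j)).card)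
      = (∑ j ∈ Finset.Ioc (mu' k) (lam k), (T' (k, j)).card) + 1 := by
    rw [hmu'k, Ioc_split h1, Finset.sum_insert hnm, hb]
    have : ∀ j ∈ Finset.Ioc (mu k + 1) (lam k), (T (k, j)).card = (T' (k, j)).card := by
      intro j hj
      rw [Finset.mem_Ioc] at hj
      rw [hT'ne k j (by simp; omega)]
    rw [Finset.sum_congr rfl this]
    simp [add_comm]
  have hE : entriesCount r lam mu T = entriesCount r lam mu' T' + 1 := by
    unfold entriesCount
    rw [← Finset.sum_erase_add Finset.univ _ (Finset.mem_univ k),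
        ← Finset.sum_erase_add Finset.univ
          (fun i => ∑ j ∈ Finset.Ioc (mu' i) (lam i), (T' (i, j)).card) (Finset.mem_univ k),
        Finset.sum_congr rfl hrow, hrowk]
    omega
  have hS : shapeSize r lam mu = shapeSize r lam mu' + 1 := by
    unfold shapeSize
    rw [← Finset.sum_erase_add Finset.univ _ (Finset.mem_univ k),
        ← Finset.sum_erase_add Finset.univ (fun i => lam i - mu' i) (Finset.mem_univ k)]
    have h2 : ∀ i ∈ Finset.univ.erase k, lam i - mu i = lam i - mu' i := by
      intro i hi; rw [hmu'ne i (Finset.mem_erase.mp hi).1]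
    rw [Finset.sum_congr rfl h2, hmu'k]
    omega
  have hP : (∏ i : Fin r, ∏ j ∈ Finset.Ioc (mu i) (lam i), ∏ m ∈ T (i, j), Xv m)
      = Xv gk * ∏ i : Fin r, ∏ j ∈ Finset.Ioc (mu' i) (lam i), ∏ m ∈ T' (i, j), Xv m := by
    rw [← Finset.prod_erase_mul Finset.univ _ (Finset.mem_univ k),
        ← Finset.prod_erase_mul Finset.univ
          (fun i => ∏ j ∈ Finset.Ioc (mu' i) (lam i), ∏ m ∈ T' (i, j), Xv m)
          (Finset.mem_univ k)]
    have h2 : ∀ i ∈ Finset.univ.erase k,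
        (∏ j ∈ Finset.Ioc (mu i) (lam i), ∏ m ∈ T (i, j), Xv m)
          = ∏ j ∈ Finset.Ioc (mu' i) (lam i), ∏ m ∈ T' (i, j), Xv m := by
      intro i hi
      have hik : i ≠ k := (Finset.mem_erase.mp hi).1
      rw [hmu'ne i hik]
      exact Finset.prod_congr rfl fun j _ => by rw [hT'ne i j (by simp [hik])]
    have h3 : (∏ j ∈ Finset.Ioc (mu k) (lam k), ∏ m ∈ T (k, j), Xv m)
        = Xv gk * ∏ j ∈ Finset.Ioc (mu' k) (lam k), ∏ m ∈ T' (k, j), Xv m := by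
      rw [hmu'k, Ioc_split h1, Finset.prod_insert hnm, hb, Finset.prod_singleton]
      congr 1
      exact Finset.prod_congr rfl fun j hj => by
        rw [Finset.mem_Ioc] at hj
        rw [hT'ne k j (by simp; omega)]
    rw [Finset.prod_congr rfl h2, h3]
    ring
  unfold wt
  rw [hE, hS, hP, Nat.succ_sub_succ]
  ring

lemma wt_case2 {r : ℕ} (lam mu f g : Fin r → ℕ) (k : Fin r) (h1 : mu k < lam k)
    {T : Fin r × ℕ → Finset ℕ} (gk : ℕ) (hb : gk ∈ T (k, mu k + 1))
    (hge : shapeSize r lam mu ≤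
      entriesCount r lam mu (Function.update T (k, mu k + 1) ((T (k, mu k + 1)).erase gk))) :
    wt r lam mu T =
      bR * Xv gk * wt r lam mu (Function.update T (k, mu k + 1) ((T (k, mu k + 1)).erase gk)) := by
  classical
  set T' := Function.update T (k, mu k + 1) ((T (k, mu k + 1)).erase gk) with hT'
  have hT'b : T' (k, mu k + 1) = (T (k, mu k + 1)).erase gk := Function.update_self _ _ _
  have hT'ne : ∀ (i : Fin r) (j : ℕ), (i, j) ≠ (k, mu k + 1) → T' (i, j) = T (i, j) :=
    fun i j hij => Function.update_of_ne hij _ _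
  have hnm : (mu k + 1) ∉ Finset.Ioc (mu k + 1) (lam k) := by simp
  have hrow : ∀ i ∈ Finset.univ.erase k,
      (∑ j ∈ Finset.Ioc (mu i) (lam i), (T (i, j)).card)
        = ∑ j ∈ Finset.Ioc (mu i) (lam i), (T' (i, j)).card := by
    intro i hi
    have hik : i ≠ k := (Finset.mem_erase.mp hi).1
    exact Finset.sum_congr rfl fun j _ => by rw [hT'ne i j (by simp [hik])]
  have hrowk : (∑ j ∈ Finset.Ioc (mu k) (lam k), (T (k, j)).card)
      = (∑ j ∈ Finset.Ioc (mu k) (lam k), (T' (k, j)).card) + 1 := by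
    rw [Ioc_split h1, Finset.sum_insert hnm, Finset.sum_insert hnm]
    have h2 : ∀ j ∈ Finset.Ioc (mu k + 1) (lam k), (T (k, j)).card = (T' (k, j)).card := by
      intro j hj
      rw [Finset.mem_Ioc] at hj
      rw [hT'ne k j (by simp; omega)]
    rw [Finset.sum_congr rfl h2, hT'b, Finset.card_erase_of_mem hb]
    have := Finset.card_pos.mpr ⟨gk, hb⟩
    omega
  have hE : entriesCount r lam mu T = entriesCount r lam mu T' + 1 := by
    unfold entriesCount
    rw [← Finset.sum_erase_add Finset.univ _ (Finset.mem_univ k),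
        ← Finset.sum_erase_add Finset.univ
          (fun i => ∑ j ∈ Finset.Ioc (mu i) (lam i), (T' (i, j)).card) (Finset.mem_univ k),
        Finset.sum_congr rfl hrow, hrowk]
    omega
  have hP : (∏ i : Fin r, ∏ j ∈ Finset.Ioc (mu i) (lam i), ∏ m ∈ T (i, j), Xv m)
      = Xv gk * ∏ i : Fin r, ∏ j ∈ Finset.Ioc (mu i) (lam i), ∏ m ∈ T' (i, j), Xv m := by
    rw [← Finset.prod_erase_mul Finset.univ _ (Finset.mem_univ k),
        ← Finset.prod_erase_mul Finset.univ
          (fun i => ∏ j ∈ Finset.Ioc (mu i) (lam i), ∏ m ∈ T' (i, j), Xv m)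
          (Finset.mem_univ k)]
    have h2 : ∀ i ∈ Finset.univ.erase k,
        (∏ j ∈ Finset.Ioc (mu i) (lam i), ∏ m ∈ T (i, j), Xv m)
          = ∏ j ∈ Finset.Ioc (mu i) (lam i), ∏ m ∈ T' (i, j), Xv m := by
      intro i hi
      have hik : i ≠ k := (Finset.mem_erase.mp hi).1
      exact Finset.prod_congr rfl fun j _ => by rw [hT'ne i j (by simp [hik])]
    have h3 : (∏ j ∈ Finset.Ioc (mu k) (lam k), ∏ m ∈ T (k, j), Xv m)
        = Xv gk * ∏ j ∈ Finset.Ioc (mu k) (lam k), ∏ m ∈ T' (k, j), Xv m := by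
      rw [Ioc_split h1, Finset.prod_insert hnm, Finset.prod_insert hnm]
      have h4 : ∀ j ∈ Finset.Ioc (mu k + 1) (lam k),
          (∏ m ∈ T (k, j), Xv m) = ∏ m ∈ T' (k, j), Xv m := by
        intro j hj
        rw [Finset.mem_Ioc] at hj
        rw [hT'ne k j (by simp; omega)]
      rw [Finset.prod_congr rfl h4, hT'b, ← Finset.mul_prod_erase _ _ hb]
      ring
    rw [Finset.prod_congr rfl h2, h3]
    ring
  unfold wt
  rw [hE, hP]
  have h5 : entriesCount r lam mu T' + 1 - shapeSize r lam mu
      = (entriesCount r lam mu T' - shapeSize r lam mu) + 1 := by omega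
  rw [h5, pow_succ]
  ring

lemma pair_ne_fst {i : Fin r} {j c : ℕ} (h : i ≠ k) : (i, j) ≠ (k, c) :=
  fun hc => h (congrArg Prod.fst hc)

lemma pair_ne_snd {i : Fin r} {j c : ℕ} (h : j ≠ c) : (i, j) ≠ (k, c) :=
  fun hc => h (congrArg Prod.snd hc)

/-- φ1 : S1 → S' -/
lemma fsvt_phi1 {T : Fin r × ℕ → Finset ℕ} (hT : IsFSVT r lam mu f g T) :
    IsFSVT r lam (Function.update mu k (mu k + 1)) f g
      (Function.update T (k, mu k + 1) ∅) := by
  obtain ⟨c1, c2, c3, c4, c5⟩ := hT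
  set mu' := Function.update mu k (mu k + 1) with hmu'def
  set T' := Function.update T (k, mu k + 1) ∅ with hT'def
  have hmu'k : mu' k = mu k + 1 := Function.update_self _ _ _
  have hmu'ne : ∀ i : Fin r, i ≠ k → mu' i = mu i := fun i hi => Function.update_of_ne hi _ _
  have hT'ne : ∀ (i : Fin r) (j : ℕ), (i, j) ≠ (k, mu k + 1) → T' (i, j) = T (i, j) :=
    fun i j hij => Function.update_of_ne hij _ _
  have hnb : ∀ (i : Fin r) (j : ℕ), mu' i < j → (i, j) ≠ (k, mu k + 1) := by
    intro i j hlt hij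
    have hik : i = k := congrArg Prod.fst hij
    have hjk : j = mu k + 1 := congrArg Prod.snd hij
    rw [hik, hmu'k] at hlt
    omega
  have hmule : ∀ i : Fin r, mu i ≤ mu' i := by
    intro i
    by_cases hik : i = k
    · rw [hik, hmu'k]; omega
    · rw [hmu'ne i hik]
  have hsh : ∀ (i : Fin r) (j : ℕ), (i, j) ≠ (k, mu k + 1) → mu i < j → mu' i < j := by
    intro i j hij hlt
    by_cases hik : i = k
    · have hjne : j ≠ mu k + 1 := fun hh => hij (by rw [hik, hh])
      rw [hik, hmu'k]
      rw [hik] at hlt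
      omega
    · rw [hmu'ne i hik]; exact hlt
  refine ⟨?_, ?_, ?_, ?_, ?_⟩
  · intro i j hnots
    by_cases hij : (i, j) = (k, mu k + 1)
    · rw [hij]; exact Function.update_self _ _ _
    · rw [hT'ne i j hij]
      exact c1 i j fun hc => hnots ⟨hsh i j hij hc.1, hc.2⟩
  · intro i j hlt hle
    rw [hT'ne i j (hnb i j hlt)]
    exact c2 i j (lt_of_le_of_lt (hmule i) hlt) hle
  · intro i j m hm
    by_cases hij : (i, j) = (k, mu k + 1)
    · rw [hij, hT'def, Function.update_self] at hm
      simp at hm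
    · rw [hT'ne i j hij] at hm
      exact c3 i j m hm
  · intro i j hlt hle a ha b hb
    rw [hT'ne i j (hnb i j hlt)] at ha
    rw [hT'ne i (j+1) (hnb i (j+1) (by omega))] at hb
    exact c4 i j (lt_of_le_of_lt (hmule i) hlt) hle a ha b hb
  · intro i h j hlt1 hle1 hlt2 hle2 a ha b hb
    rw [hT'ne i j (hnb i j hlt1)] at ha
    rw [hT'ne _ j (hnb _ j hlt2)] at hb
    exact c5 i h j (lt_of_le_of_lt (hmule i) hlt1) hle1
      (lt_of_le_of_lt (hmule _) hlt2) hle2 a ha b hb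

/-- ψ1 : S' → S1 -/
lemma fsvt_psi1 (h1 : mu k < lam k) (h2 : g k ≤ f k)
    (h3 : ∀ h : (k : ℕ) + 1 < r, g k < g ⟨(k : ℕ) + 1, h⟩)
    (h4 : ∀ _ : 0 < (k : ℕ),
      mu k < mu ⟨(k : ℕ) - 1, Nat.lt_of_le_of_lt (Nat.sub_le _ _) k.isLt⟩)
    {T : Fin r × ℕ → Finset ℕ}
    (hT : IsFSVT r lam (Function.update mu k (mu k + 1)) f g T) :
    IsFSVT r lam mu f g (Function.update T (k, mu k + 1) {g k}) := by
  obtain ⟨c1, c2, c3, c4, c5⟩ := hT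
  set mu' := Function.update mu k (mu k + 1) with hmu'def
  set T' := Function.update T (k, mu k + 1) {g k} with hT'def
  have hmu'k : mu' k = mu k + 1 := Function.update_self _ _ _
  have hmu'ne : ∀ i : Fin r, i ≠ k → mu' i = mu i := fun i hi => Function.update_of_ne hi _ _
  have hT'b : T' (k, mu k + 1) = {g k} := Function.update_self _ _ _
  have hT'ne : ∀ (i : Fin r) (j : ℕ), (i, j) ≠ (k, mu k + 1) → T' (i, j) = T (i, j) :=
    fun i j hij => Function.update_of_ne hij _ _
  have hmule : ∀ i : Fin r, mu i ≤ mu' i := by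
    intro i
    by_cases hik : i = k
    · rw [hik, hmu'k]; omega
    · rw [hmu'ne i hik]
  have hsh : ∀ (i : Fin r) (j : ℕ), (i, j) ≠ (k, mu k + 1) → mu i < j → mu' i < j := by
    intro i j hij hlt
    by_cases hik : i = k
    · have hjne : j ≠ mu k + 1 := fun hh => hij (by rw [hik, hh])
      rw [hik, hmu'k]
      rw [hik] at hlt
      omega
    · rw [hmu'ne i hik]; exact hlt
  refine ⟨?_, ?_, ?_, ?_, ?_⟩
  · intro i j hnots
    by_cases hij : (i, j) = (k, mu k + 1)
    · exfalso
      apply hnots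
      have hik : i = k := congrArg Prod.fst hij
      have hjk : j = mu k + 1 := congrArg Prod.snd hij
      rw [hik, hjk]
      exact ⟨by omega, by omega⟩
    · rw [hT'ne i j hij]
      exact c1 i j fun hc => hnots ⟨lt_of_le_of_lt (hmule i) hc.1, hc.2⟩
  · intro i j hlt hle
    by_cases hij : (i, j) = (k, mu k + 1)
    · rw [hij, hT'b]; exact ⟨g k, Finset.mem_singleton_self _⟩
    · rw [hT'ne i j hij]
      exact c2 i j (hsh i j hij hlt) hle
  · intro i j m hm
    by_cases hij : (i, j) = (k, mu k + 1)
    · rw [hij, hT'b, Finset.mem_singleton] at hm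
      have hik : i = k := congrArg Prod.fst hij
      rw [hik, hm]
      exact ⟨le_refl _, h2⟩
    · rw [hT'ne i j hij] at hm
      exact c3 i j m hm
  · intro i j hlt hle a ha b hb
    by_cases hij1 : (i, j) = (k, mu k + 1)
    · have hik : i = k := congrArg Prod.fst hij1
      have hjk : j = mu k + 1 := congrArg Prod.snd hij1
      rw [hij1, hT'b, Finset.mem_singleton] at ha
      rw [hT'ne i (j+1) (pair_ne_snd (by omega))] at hb
      have := (c3 i (j+1) b hb).1
      rw [hik] at this
      omega
    · by_cases hij2 : (i, j+1) = (k, mu k + 1)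
      · exfalso
        have hik : i = k := congrArg Prod.fst hij2
        have hjk : j + 1 = mu k + 1 := congrArg Prod.snd hij2
        rw [hik] at hlt
        omega
      · rw [hT'ne i j hij1] at ha
        rw [hT'ne i (j+1) hij2] at hb
        exact c4 i j (hsh i j hij1 hlt) hle a ha b hb
  · intro i h j hlt1 hle1 hlt2 hle2 a ha b hb
    by_cases hij1 : (i, j) = (k, mu k + 1)
    · have hik : i = k := congrArg Prod.fst hij1
      have hjk : j = mu k + 1 := congrArg Prod.snd hij1
      have hval : (i : ℕ) = (k : ℕ) := congrArg Fin.val hik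
      rw [hij1, hT'b, Finset.mem_singleton] at ha
      have hi1ne : (⟨(i : ℕ) + 1, h⟩ : Fin r) ≠ k := by
        intro hcon
        have := congrArg Fin.val hcon
        simp only [Fin.val_mk] at this
        omega
      rw [hT'ne _ j (pair_ne_fst hi1ne)] at hb
      have hb1 := (c3 _ j b hb).1
      have hk1 : (k : ℕ) + 1 < r := by omega
      have h3' := h3 hk1
      have heq : (⟨(i : ℕ) + 1, h⟩ : Fin r) = ⟨(k : ℕ) + 1, hk1⟩ := by
        apply Fin.ext; simp; omega
      rw [heq] at hb1
      omega
    · by_cases hij2 : ((⟨(i : ℕ) + 1, h⟩ : Fin r), j) = (k, mu k + 1)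
      · exfalso
        have hik : (⟨(i : ℕ) + 1, h⟩ : Fin r) = k := congrArg Prod.fst hij2
        have hjk : j = mu k + 1 := congrArg Prod.snd hij2
        have hval : (i : ℕ) + 1 = (k : ℕ) := congrArg Fin.val hik
        have hkpos : 0 < (k : ℕ) := by omega
        have h4' := h4 hkpos
        have hieq : (⟨(k : ℕ) - 1, Nat.lt_of_le_of_lt (Nat.sub_le _ _) k.isLt⟩ : Fin r) = i := by
          apply Fin.ext; simp; omega
        rw [hieq] at h4'
        omega
      · rw [hT'ne i j hij1] at ha
        rw [hT'ne _ j hij2] at hb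
        exact c5 i h j (hsh i j hij1 hlt1) hle1 (hsh _ j hij2 hlt2) hle2 a ha b hb

/-- ψ2 : S'' → S2 -/
lemma fsvt_psi2 (h1 : mu k < lam k) (h2 : g k ≤ f k)
    (h3 : ∀ h : (k : ℕ) + 1 < r, g k < g ⟨(k : ℕ) + 1, h⟩)
    (h4 : ∀ _ : 0 < (k : ℕ),
      mu k < mu ⟨(k : ℕ) - 1, Nat.lt_of_le_of_lt (Nat.sub_le _ _) k.isLt⟩)
    {T : Fin r × ℕ → Finset ℕ}
    (hT : IsFSVT r lam mu f (Function.update g k (g k + 1)) T) :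
    IsFSVT r lam mu f g (Function.update T (k, mu k + 1) (insert (g k) (T (k, mu k + 1)))) := by
  obtain ⟨c1, c2, c3, c4, c5⟩ := hT
  set g' := Function.update g k (g k + 1) with hg'def
  set T' := Function.update T (k, mu k + 1) (insert (g k) (T (k, mu k + 1))) with hT'def
  have hg'k : g' k = g k + 1 := Function.update_self _ _ _
  have hg'ne : ∀ i : Fin r, i ≠ k → g' i = g i := fun i hi => Function.update_of_ne hi _ _
  have hT'b : T' (k, mu k + 1) = insert (g k) (T (k, mu k + 1)) := Function.update_self _ _ _
  have hT'ne : ∀ (i : Fin r) (j : ℕ), (i, j) ≠ (k, mu k + 1) → T' (i, j) = T (i, j) :=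
    fun i j hij => Function.update_of_ne hij _ _
  have hgle : ∀ i : Fin r, g i ≤ g' i := by
    intro i
    by_cases hik : i = k
    · rw [hik, hg'k]; omega
    · rw [hg'ne i hik]
  refine ⟨?_, ?_, ?_, ?_, ?_⟩
  · intro i j hnots
    by_cases hij : (i, j) = (k, mu k + 1)
    · exfalso
      apply hnots
      have hik : i = k := congrArg Prod.fst hij
      have hjk : j = mu k + 1 := congrArg Prod.snd hij
      rw [hik, hjk]
      exact ⟨by omega, by omega⟩
    · rw [hT'ne i j hij]
      exact c1 i j hnots
  · intro i j hlt hle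
    by_cases hij : (i, j) = (k, mu k + 1)
    · rw [hij, hT'b]
      exact ⟨g k, Finset.mem_insert_self _ _⟩
    · rw [hT'ne i j hij]
      exact c2 i j hlt hle
  · intro i j m hm
    by_cases hij : (i, j) = (k, mu k + 1)
    · have hik : i = k := congrArg Prod.fst hij
      rw [hij, hT'b, Finset.mem_insert] at hm
      rw [hik]
      rcases hm with hm | hm
      · rw [hm]; exact ⟨le_refl _, h2⟩
      · have := c3 k (mu k + 1) m hm
        rw [hg'k] at this
        exact ⟨by omega, this.2⟩
    · rw [hT'ne i j hij] at hm
      have := c3 i j m hm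
      have := hgle i
      exact ⟨by omega, (c3 i j m hm).2⟩
  · intro i j hlt hle a ha b hb
    by_cases hij1 : (i, j) = (k, mu k + 1)
    · have hik : i = k := congrArg Prod.fst hij1
      have hjk : j = mu k + 1 := congrArg Prod.snd hij1
      rw [hij1, hT'b, Finset.mem_insert] at ha
      rw [hT'ne i (j+1) (pair_ne_snd (by omega))] at hb
      rcases ha with ha | ha
      · have := (c3 i (j+1) b hb).1
        rw [hik, hg'k] at this
        omega
      · refine c4 i j hlt hle a ?_ b hb
        rw [hij1]; exact ha
    · by_cases hij2 : (i, j+1) = (k, mu k + 1)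
      · exfalso
        have hjk : j + 1 = mu k + 1 := congrArg Prod.snd hij2
        have hik : i = k := congrArg Prod.fst hij2
        rw [hik] at hlt
        omega
      · rw [hT'ne i j hij1] at ha
        rw [hT'ne i (j+1) hij2] at hb
        exact c4 i j hlt hle a ha b hb
  · intro i h j hlt1 hle1 hlt2 hle2 a ha b hb
    by_cases hij1 : (i, j) = (k, mu k + 1)
    · have hik : i = k := congrArg Prod.fst hij1
      have hjk : j = mu k + 1 := congrArg Prod.snd hij1
      have hval : (i : ℕ) = (k : ℕ) := congrArg Fin.val hik
      have hi1ne : (⟨(i : ℕ) + 1, h⟩ : Fin r) ≠ k := by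
        intro hcon
        have := congrArg Fin.val hcon
        simp only [Fin.val_mk] at this
        omega
      rw [hij1, hT'b, Finset.mem_insert] at ha
      rw [hT'ne _ j (pair_ne_fst hi1ne)] at hb
      rcases ha with ha | ha
      · have hb1 := (c3 _ j b hb).1
        rw [hg'ne _ hi1ne] at hb1
        have hk1 : (k : ℕ) + 1 < r := by omega
        have h3' := h3 hk1
        have heq : (⟨(i : ℕ) + 1, h⟩ : Fin r) = ⟨(k : ℕ) + 1, hk1⟩ := by
          apply Fin.ext; simp; omega
        rw [heq] at hb1
        omega
      · refine c5 i h j hlt1 hle1 hlt2 hle2 a ?_ b hb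
        rw [hij1]; exact ha
    · by_cases hij2 : ((⟨(i : ℕ) + 1, h⟩ : Fin r), j) = (k, mu k + 1)
      · exfalso
        have hik : (⟨(i : ℕ) + 1, h⟩ : Fin r) = k := congrArg Prod.fst hij2
        have hjk : j = mu k + 1 := congrArg Prod.snd hij2
        have hval : (i : ℕ) + 1 = (k : ℕ) := congrArg Fin.val hik
        have hkpos : 0 < (k : ℕ) := by omega
        have h4' := h4 hkpos
        have hieq : (⟨(k : ℕ) - 1, Nat.lt_of_le_of_lt (Nat.sub_le _ _) k.isLt⟩ : Fin r) = i := by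
          apply Fin.ext; simp; omega
        rw [hieq] at h4'
        omega
      · rw [hT'ne i j hij1] at ha
        rw [hT'ne _ j hij2] at hb
        exact c5 i h j hlt1 hle1 hlt2 hle2 a ha b hb

/-- φ2 : S2 → S'' -/
lemma fsvt_phi2 (h1 : mu k < lam k)
    {T : Fin r × ℕ → Finset ℕ} (hT : IsFSVT r lam mu f g T)
    (hbm : g k ∈ T (k, mu k + 1)) (hbne : T (k, mu k + 1) ≠ {g k}) :
    IsFSVT r lam mu f (Function.update g k (g k + 1))
      (Function.update T (k, mu k + 1) ((T (k, mu k + 1)).erase (g k))) := by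
  obtain ⟨m0, hm0, hm0ne⟩ : ∃ m0 ∈ T (k, mu k + 1), m0 ≠ g k := by
    by_contra hcon
    push_neg at hcon
    exact hbne (Finset.eq_singleton_iff_unique_mem.mpr ⟨hbm, hcon⟩)
  have c1 := hT.1
  have c2 := hT.2.1
  have c3 := hT.2.2.1
  have c4 := hT.2.2.2.1
  have c5 := hT.2.2.2.2
  have hm0g : g k + 1 ≤ m0 := by
    have := (c3 k (mu k + 1) m0 hm0).1
    omega
  set g' := Function.update g k (g k + 1) with hg'def
  set T' := Function.update T (k, mu k + 1) ((T (k, mu k + 1)).erase (g k)) with hT'def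
  have hg'k : g' k = g k + 1 := Function.update_self _ _ _
  have hg'ne : ∀ i : Fin r, i ≠ k → g' i = g i := fun i hi => Function.update_of_ne hi _ _
  have hT'b : T' (k, mu k + 1) = (T (k, mu k + 1)).erase (g k) := Function.update_self _ _ _
  have hT'ne : ∀ (i : Fin r) (j : ℕ), (i, j) ≠ (k, mu k + 1) → T' (i, j) = T (i, j) :=
    fun i j hij => Function.update_of_ne hij _ _
  have hT'sub : ∀ (i : Fin r) (j : ℕ) (m : ℕ), m ∈ T' (i, j) → m ∈ T (i, j) := by
    intro i j m hm
    by_cases hij : (i, j) = (k, mu k + 1)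
    · rw [hij, hT'b] at hm
      rw [hij]
      exact Finset.mem_of_mem_erase hm
    · rw [hT'ne i j hij] at hm; exact hm
  refine ⟨?_, ?_, ?_, ?_, ?_⟩
  · intro i j hnots
    by_cases hij : (i, j) = (k, mu k + 1)
    · exfalso
      apply hnots
      have hik : i = k := congrArg Prod.fst hij
      have hjk : j = mu k + 1 := congrArg Prod.snd hij
      rw [hik, hjk]
      exact ⟨by omega, by omega⟩
    · rw [hT'ne i j hij]
      exact c1 i j hnots
  · intro i j hlt hle
    by_cases hij : (i, j) = (k, mu k + 1)
    · rw [hij, hT'b]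
      exact ⟨m0, Finset.mem_erase.mpr ⟨hm0ne, hm0⟩⟩
    · rw [hT'ne i j hij]
      exact c2 i j hlt hle
  · intro i j m hm
    by_cases hik : i = k
    · rw [hik] at hm ⊢
      rw [hg'k]
      by_cases hj1 : j = mu k + 1
      · rw [hj1, hT'b, Finset.mem_erase] at hm
        have := c3 k (mu k + 1) m hm.2
        have hmne := hm.1
        exact ⟨by omega, (c3 k (mu k + 1) m hm.2).2⟩
      · rw [hT'ne k j (pair_ne_snd hj1)] at hm
        have hsh2 : mu k < j ∧ j ≤ lam k := by
          by_contra hcon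
          rw [c1 k j hcon] at hm
          exact absurd hm (Finset.notMem_empty m)
        have hj2 : mu k + 2 ≤ j := by omega
        have := chain_row hT k hm0 j hj2 hsh2.2 m hm
        exact ⟨by omega, (c3 k j m hm).2⟩
    · rw [hT'ne i j (pair_ne_fst hik)] at hm
      rw [hg'ne i hik]
      exact c3 i j m hm
  · intro i j hlt hle a ha b hb
    exact c4 i j hlt hle a (hT'sub i j a ha) b (hT'sub i (j+1) b hb)
  · intro i h j hlt1 hle1 hlt2 hle2 a ha b hb
    exact c5 i h j hlt1 hle1 hlt2 hle2 a (hT'sub i j a ha) b (hT'sub _ j b hb)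

/-- S3 ⊆ S'' -/
lemma fsvt_s3 (h1 : mu k < lam k)
    {T : Fin r × ℕ → Finset ℕ} (hT : IsFSVT r lam mu f g T)
    (hnb : g k ∉ T (k, mu k + 1)) :
    IsFSVT r lam mu f (Function.update g k (g k + 1)) T := by
  have c1 := hT.1
  have c2 := hT.2.1
  have c3 := hT.2.2.1
  obtain ⟨m0, hm0⟩ := c2 k (mu k + 1) (by omega) (by omega)
  have hm0g : g k + 1 ≤ m0 := by
    have := (c3 k (mu k + 1) m0 hm0).1
    have : m0 ≠ g k := fun hh => hnb (hh ▸ hm0)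
    have := (c3 k (mu k + 1) m0 hm0).1
    omega
  set g' := Function.update g k (g k + 1) with hg'def
  have hg'k : g' k = g k + 1 := Function.update_self _ _ _
  have hg'ne : ∀ i : Fin r, i ≠ k → g' i = g i := fun i hi => Function.update_of_ne hi _ _
  refine ⟨c1, c2, ?_, hT.2.2.2.1, hT.2.2.2.2⟩
  intro i j m hm
  by_cases hik : i = k
  · rw [hik] at hm ⊢
    rw [hg'k]
    by_cases hj1 : j = mu k + 1
    · rw [hj1] at hm
      have : m ≠ g k := fun hh => hnb (hh ▸ hm)
      have := (c3 k (mu k + 1) m hm).1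
      exact ⟨by omega, (c3 k (mu k + 1) m hm).2⟩
    · have hsh2 : mu k < j ∧ j ≤ lam k := by
        by_contra hcon
        rw [c1 k j hcon] at hm
        exact absurd hm (Finset.notMem_empty m)
      have hj2 : mu k + 2 ≤ j := by omega
      have := chain_row hT k hm0 j hj2 hsh2.2 m hm
      exact ⟨by omega, (c3 k j m hm).2⟩
  · rw [hg'ne i hik]
    exact c3 i j m hm

/-- S'' ⊆ S3 : monotonicity in g -/
lemma fsvt_g_mono {g₁ : Fin r → ℕ} (hg : ∀ i, g i ≤ g₁ i)
    {T : Fin r × ℕ → Finset ℕ} (hT : IsFSVT r lam mu f g₁ T) :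
    IsFSVT r lam mu f g T := by
  refine ⟨hT.1, hT.2.1, ?_, hT.2.2.2.1, hT.2.2.2.2⟩
  intro i j m hm
  have := hT.2.2.1 i j m hm
  exact ⟨le_trans (hg i) this.1, this.2⟩

end AuxStmt15

theorem stmt15 (r : ℕ) (lam mu f g : Fin r → ℕ)
    (hlam_anti : ∀ i j : Fin r, i ≤ j → lam j ≤ lam i) (hlam_pos : ∀ i, 0 < lam i)
    (hmu_anti : ∀ i j : Fin r, i ≤ j → mu j ≤ mu i) (hmule : ∀ i, mu i ≤ lam i)
    (hf_pos : ∀ i, 0 < f i) (hg_pos : ∀ i, 0 < g i)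
    (hflag : ∀ (i : Fin r) (h : (i : ℕ) + 1 < r), mu i < lam ⟨(i : ℕ) + 1, h⟩ →
      g i ≤ g ⟨(i : ℕ) + 1, h⟩ ∧ f i ≤ f ⟨(i : ℕ) + 1, h⟩)
    (k : Fin r)
    (h1 : mu k < lam k) (h2 : g k ≤ f k)
    (h3 : ∀ h : (k : ℕ) + 1 < r, g k < g ⟨(k : ℕ) + 1, h⟩)
    (h4 : ∀ _ : 0 < (k : ℕ),
      mu k < mu ⟨(k : ℕ) - 1, Nat.lt_of_le_of_lt (Nat.sub_le _ _) k.isLt⟩) :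
    GF r lam mu f g =
      Xv (g k) * GF r lam (Function.update mu k (mu k + 1)) f g +
      (1 + bR * Xv (g k)) * GF r lam mu f (Function.update g k (g k + 1)) := by
  classical
  set mu' := Function.update mu k (mu k + 1) with hmu'def
  set g' := Function.update g k (g k + 1) with hg'def
  have hg'k : g' k = g k + 1 := Function.update_self _ _ _
  have hgle : ∀ i, g i ≤ g' i := by
    intro i
    by_cases hik : i = k
    · rw [hik, hg'k]; omega
    · rw [hg'def, Function.update_of_ne hik]
  have hS : {T | IsFSVT r lam mu f g T}.Finite := fsvt_finite r lam mu f g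
  have hS' : {T | IsFSVT r lam mu' f g T}.Finite := fsvt_finite r lam mu' f g
  have hS'' : {T | IsFSVT r lam mu f g' T}.Finite := fsvt_finite r lam mu f g'
  have e0 : GF r lam mu f g = ∑ T ∈ hS.toFinset, wt r lam mu T :=
    finsum_mem_eq_finite_toFinset_sum _ hS
  have e0' : GF r lam mu' f g = ∑ T ∈ hS'.toFinset, wt r lam mu' T :=
    finsum_mem_eq_finite_toFinset_sum _ hS'
  have e0'' : GF r lam mu f g' = ∑ T ∈ hS''.toFinset, wt r lam mu T :=
    finsum_mem_eq_finite_toFinset_sum _ hS''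
  set p : (Fin r × ℕ → Finset ℕ) → Prop := fun T => g k ∈ T (k, mu k + 1) with hpdef
  set q : (Fin r × ℕ → Finset ℕ) → Prop := fun T => T (k, mu k + 1) = {g k} with hqdef
  -- split the sum over S into three pieces
  have hsplit : ∑ T ∈ hS.toFinset, wt r lam mu T
      = (∑ T ∈ hS.toFinset.filter q, wt r lam mu T)
        + (∑ T ∈ hS.toFinset.filter (fun T => p T ∧ ¬ q T), wt r lam mu T)
        + (∑ T ∈ hS.toFinset.filter (fun T => ¬ p T), wt r lam mu T) := by
    rw [← Finset.sum_filter_add_sum_filter_not hS.toFinset p (wt r lam mu)]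
    congr 1
    rw [← Finset.sum_filter_add_sum_filter_not (hS.toFinset.filter p) q (wt r lam mu)]
    congr 1
    · rw [Finset.filter_filter]
      apply Finset.sum_congr _ (fun _ _ => rfl)
      apply Finset.filter_congr
      intro T _
      constructor
      · exact fun h => h.2
      · intro h
        refine ⟨?_, h⟩
        rw [hpdef, hqdef] at *
        rw [h]
        exact Finset.mem_singleton_self _
    · rw [Finset.filter_filter]
  -- piece 1 : boxes b with T b = {g k}
  have hA1 : (∑ T ∈ hS.toFinset.filter q, wt r lam mu T)
      = Xv (g k) * ∑ T ∈ hS'.toFinset, wt r lam mu' T := by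
    rw [Finset.mul_sum]
    refine Finset.sum_bij'
      (fun T _ => Function.update T (k, mu k + 1) ∅)
      (fun T _ => Function.update T (k, mu k + 1) {g k}) ?_ ?_ ?_ ?_ ?_
    · intro T hTm
      rw [Finset.mem_filter, Set.Finite.mem_toFinset] at hTm
      rw [Set.Finite.mem_toFinset]
      exact fsvt_phi1 hTm.1
    · intro T hTm
      rw [Set.Finite.mem_toFinset] at hTm
      rw [Finset.mem_filter, Set.Finite.mem_toFinset]
      refine ⟨fsvt_psi1 h1 h2 h3 h4 hTm, ?_⟩
      rw [hqdef]
      exact Function.update_self _ _ _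
    · intro T hTm
      rw [Finset.mem_filter] at hTm
      have hq : T (k, mu k + 1) = {g k} := hTm.2
      simp only [Function.update_idem]
      rw [← hq]
      exact Function.update_eq_self _ _
    · intro T hTm
      rw [Set.Finite.mem_toFinset] at hTm
      have hb0 : T (k, mu k + 1) = ∅ := by
        apply hTm.1 k (mu k + 1)
        rw [hmu'def]
        rw [Function.update_self]
        omega
      simp only [Function.update_idem]
      rw [← hb0]
      exact Function.update_eq_self _ _
    · intro T hTm
      rw [Finset.mem_filter] at hTm
      exact wt_case1 lam mu k h1 (g k) hTm.2
  -- piece 2 : boxes b containing g k along with other entries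
  have hA2 : (∑ T ∈ hS.toFinset.filter (fun T => p T ∧ ¬ q T), wt r lam mu T)
      = bR * Xv (g k) * ∑ T ∈ hS''.toFinset, wt r lam mu T := by
    rw [Finset.mul_sum]
    refine Finset.sum_bij'
      (fun T _ => Function.update T (k, mu k + 1) ((T (k, mu k + 1)).erase (g k)))
      (fun T _ => Function.update T (k, mu k + 1) (insert (g k) (T (k, mu k + 1)))) ?_ ?_ ?_ ?_ ?_
    · intro T hTm
      rw [Finset.mem_filter, Set.Finite.mem_toFinset] at hTm
      rw [Set.Finite.mem_toFinset]
      exact fsvt_phi2 h1 hTm.1 hTm.2.1 hTm.2.2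
    · intro T hTm
      rw [Set.Finite.mem_toFinset] at hTm
      rw [Finset.mem_filter, Set.Finite.mem_toFinset]
      refine ⟨fsvt_psi2 h1 h2 h3 h4 hTm, ?_, ?_⟩
      · show g k ∈ Function.update T (k, mu k + 1) (insert (g k) (T (k, mu k + 1))) (k, mu k + 1)
        rw [Function.update_self]
        exact Finset.mem_insert_self _ _
      · show ¬ Function.update T (k, mu k + 1) (insert (g k) (T (k, mu k + 1))) (k, mu k + 1) = {g k}
        rw [Function.update_self]
        obtain ⟨m, hm⟩ := hTm.2.1 k (mu k + 1) (by omega) (by omega)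
        have hmg : g k + 1 ≤ m := by
          have := (hTm.2.2.1 k (mu k + 1) m hm).1
          rw [hg'k] at this
          omega
        intro hcon
        have : m ∈ ({g k} : Finset ℕ) := hcon ▸ Finset.mem_insert_of_mem hm
        rw [Finset.mem_singleton] at this
        omega
    · intro T hTm
      rw [Finset.mem_filter] at hTm
      simp only [Function.update_idem, Function.update_self]
      rw [Finset.insert_erase hTm.2.1]
      exact Function.update_eq_self _ _
    · intro T hTm
      rw [Set.Finite.mem_toFinset] at hTm
      have hnb : g k ∉ T (k, mu k + 1) := by
        intro hmem
        have := (hTm.2.2.1 k (mu k + 1) (g k) hmem).1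
        rw [hg'k] at this
        omega
      simp only [Function.update_idem, Function.update_self]
      rw [Finset.erase_insert hnb]
      exact Function.update_eq_self _ _
    · intro T hTm
      rw [Finset.mem_filter, Set.Finite.mem_toFinset] at hTm
      exact wt_case2 lam mu f g' k h1 (g k) hTm.2.1
        (ec_ge (fsvt_phi2 h1 hTm.1 hTm.2.1 hTm.2.2))
  -- piece 3 : boxes b not containing g k
  have hA3 : hS.toFinset.filter (fun T => ¬ p T) = hS''.toFinset := by
    ext T
    rw [Finset.mem_filter, Set.Finite.mem_toFinset, Set.Finite.mem_toFinset]
    constructor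
    · rintro ⟨hT, hnp⟩
      exact fsvt_s3 h1 hT hnp
    · intro hT
      refine ⟨fsvt_g_mono hgle hT, ?_⟩
      intro hmem
      have := (hT.2.2.1 k (mu k + 1) (g k) hmem).1
      rw [hg'k] at this
      omega
  rw [e0, e0', e0'', hsplit, hA1, hA2, hA3]
  ring

end
end

section
/- Let λ/μ be a skew shape of length r with flagging f/g, and let 2 ≤ k ≤ r satisfy g_{k−1} = g_k and μ_{k−1} = μ_k. Let g' be obtained from g by replacing g_k with g_k + 1. Then G̃_{λ/μ,f/g} = G̃_{λ/μ,f/g'}. -/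
/- Common setup: `R = ℤ[β][[x₀,x₁,x₂,…]]` with `β = Polynomial.X`; only the
variables `x i` for `i ≥ 1` are used in the statements. -/

attribute [local instance] Classical.propDecidable

noncomputable section

-- ===== auxiliary development =====

theorem coeff_eq (d : ℕ →₀ ℕ) (fq : R) : MvPowerSeries.coeff (R := A) d fq = fq d := rfl

theorem Xv_mul_coeff (q : ℕ) (fq : R) (d : ℕ →₀ ℕ) :
    MvPowerSeries.coeff (R := A) d (Xv q * fq) =
      if Finsupp.single q 1 ≤ d then MvPowerSeries.coeff (R := A) (d - Finsupp.single q 1) fq else 0 := by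
  rw [Xv, MvPowerSeries.X, MvPowerSeries.coeff_monomial_mul]
  split <;> simp

theorem bR_mul_coeff (fq : R) (d : ℕ →₀ ℕ) :
    MvPowerSeries.coeff (R := A) d (bR * fq) = Polynomial.X * MvPowerSeries.coeff (R := A) d fq := by
  rw [bR, MvPowerSeries.coeff_C_mul]

theorem CA_mul_coeff (a : A) (fq : R) (d : ℕ →₀ ℕ) :
    MvPowerSeries.coeff (R := A) d ((MvPowerSeries.C (σ := ℕ) (R := A) a) * fq) = a * MvPowerSeries.coeff (R := A) d fq := by
  rw [MvPowerSeries.coeff_C_mul]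

theorem degSum_add (u v : ℕ →₀ ℕ) : degSum (u + v) = degSum u + degSum v := by
  unfold degSum
  exact Finsupp.sum_add_index' (fun _ => rfl) (fun _ _ _ => rfl)

theorem degSum_le_of_le {u d : ℕ →₀ ℕ} (h : u ≤ d) : degSum u ≤ degSum d := by
  have : u + (d - u) = d := add_tsub_cancel_of_le h
  calc degSum u ≤ degSum u + degSum (d - u) := Nat.le_add_right _ _
    _ = degSum d := by rw [← degSum_add, this]

theorem Rext {fq gq : R} (h : ∀ d, MvPowerSeries.coeff (R := A) d fq = MvPowerSeries.coeff (R := A) d gq) :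
    fq = gq := MvPowerSeries.ext h

theorem degSum_eq_zero_iff (d : ℕ →₀ ℕ) : degSum d = 0 ↔ d = 0 := by
  constructor
  · intro h
    unfold degSum Finsupp.sum at h
    rw [Finset.sum_eq_zero_iff] at h
    ext a
    by_cases hmem : a ∈ d.support
    · exact h a hmem
    · simpa using (Finsupp.notMem_support_iff.mp hmem)
  · intro h; subst h; rfl

theorem hsym_coeff (q p : ℕ) (j : ℤ) (d : ℕ →₀ ℕ) :
    MvPowerSeries.coeff (R := A) d (hsym q p j) =
      if (∀ k ∈ d.support, q ≤ k ∧ k ≤ p) ∧ (degSum d : ℤ) = j then 1 else 0 := rfl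

theorem hsym_neg (q p : ℕ) (j : ℤ) (hj : j < 0) : hsym q p j = 0 := by
  refine Rext fun d => ?_
  rw [hsym_coeff]
  have : ¬ ((degSum d : ℤ) = j) := by omega
  simp [this]

/-- vanishing of low coefficients of `f * hsym q p j` -/
theorem coeff_mul_hsym_eq_zero (fq : R) (q p : ℕ) (j : ℤ) (d : ℕ →₀ ℕ)
    (h : (degSum d : ℤ) < j) : MvPowerSeries.coeff (R := A) d (fq * hsym q p j) = 0 := by
  classical
  rw [MvPowerSeries.coeff_mul]
  apply Finset.sum_eq_zero
  intro x hx
  have hx2 : x.1 + x.2 = d := Finset.HasAntidiagonal.mem_antidiagonal.mp hx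
  have : degSum x.2 ≤ degSum d := by
    rw [← hx2, degSum_add]; omega
  have hne : ¬ ((degSum x.2 : ℤ) = j) := by omega
  rw [hsym_coeff]
  simp [hne]

theorem support_cond_empty {q p : ℕ} (hpq : p < q) {d : ℕ →₀ ℕ}
    (h : ∀ k ∈ d.support, q ≤ k ∧ k ≤ p) : d = 0 := by
  ext a
  by_cases hmem : a ∈ d.support
  · have := h a hmem; omega
  · simpa using (Finsupp.notMem_support_iff.mp hmem)

theorem hsym_scalar (q p : ℕ) (hpq : p < q) (j : ℤ) :
    hsym q p j = if j = 0 then 1 else 0 := by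
  refine Rext fun d => ?_
  rw [hsym_coeff]
  by_cases hj : j = 0
  · subst hj
    rw [if_pos rfl]
    by_cases hd : d = 0
    · subst hd
      rw [if_pos ⟨by simp, by simp [degSum]⟩, MvPowerSeries.coeff_one, if_pos rfl]
    · have hcond : ¬ ((∀ k ∈ d.support, q ≤ k ∧ k ≤ p) ∧ (degSum d : ℤ) = 0) :=
        fun h => hd (support_cond_empty hpq h.1)
      rw [if_neg hcond, MvPowerSeries.coeff_one, if_neg hd]
  · rw [if_neg hj]
    have hcond : ¬ ((∀ k ∈ d.support, q ≤ k ∧ k ≤ p) ∧ (degSum d : ℤ) = j) := by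
      rintro ⟨h1, h2⟩
      have := support_cond_empty hpq h1
      subst this
      simp [degSum] at h2
      omega
    rw [if_neg hcond]
    simp

/-- the recursion `h_j(x_q..x_p) = h_j(x_{q+1}..x_p) + x_q h_{j-1}(x_q..x_p)`, for `q ≤ p` -/
theorem hsym_rec (q p : ℕ) (hqp : q ≤ p) (j : ℤ) :
    hsym q p j = hsym (q+1) p j + Xv q * hsym q p (j-1) := by
  refine Rext fun d => ?_
  rw [map_add, hsym_coeff, hsym_coeff, Xv_mul_coeff]
  by_cases hq : Finsupp.single q 1 ≤ d
  · have hdq : 1 ≤ d q := by simpa using (Finsupp.single_le_iff.mp hq)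
    set e : ℕ →₀ ℕ := Finsupp.single q 1 with he
    have hsub : ∀ a, (d - e) a = d a - e a := fun a => Finsupp.tsub_apply d e a
    have hsupp2 : ¬ (∀ k ∈ d.support, q+1 ≤ k ∧ k ≤ p) := by
      intro hall
      have := hall q (Finsupp.mem_support_iff.2 (by omega))
      omega
    have hdeg : degSum (d - e) + 1 = degSum d := by
      have h1 : (d - e) + e = d := tsub_add_cancel_of_le hq
      have h2 := degSum_add (d - e) e
      rw [h1] at h2
      have : degSum e = 1 := by simp [he, degSum, Finsupp.sum_single_index]
      omega
    have hsuppiff : (∀ k ∈ (d-e).support, q ≤ k ∧ k ≤ p) ↔ (∀ k ∈ d.support, q ≤ k ∧ k ≤ p) := by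
      constructor
      · intro hall k hk
        rcases eq_or_ne k q with rfl | hne
        · exact ⟨le_refl _, hqp⟩
        · refine hall k ?_
          rw [Finsupp.mem_support_iff] at hk ⊢
          rw [hsub]
          simp [he, Finsupp.single_apply, hne.symm]
          omega
      · intro hall k hk
        refine hall k ?_
        rw [Finsupp.mem_support_iff] at hk ⊢
        rw [hsub k] at hk
        omega
    rw [if_pos hq, hsym_coeff]
    have h2 : ¬ ((∀ k ∈ d.support, q+1 ≤ k ∧ k ≤ p) ∧ (degSum d : ℤ) = j) :=
      fun h => hsupp2 h.1
    rw [if_neg h2, zero_add]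
    exact (if_congr (and_congr hsuppiff (by omega)) rfl rfl).symm
  · have hdq : d q = 0 := by
      by_contra h
      exact hq (Finsupp.single_le_iff.mpr (by omega))
    have hiff : (∀ k ∈ d.support, q ≤ k ∧ k ≤ p) ↔ (∀ k ∈ d.support, q+1 ≤ k ∧ k ≤ p) := by
      constructor
      · intro hall k hk
        have := hall k hk
        have : k ≠ q := by
          intro h; subst h
          exact (Finsupp.mem_support_iff.mp hk) hdq
        omega
      · intro hall k hk
        have := hall k hk; omega
    rw [if_neg hq, add_zero]
    exact if_congr (and_congr hiff Iff.rfl) rfl rfl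

theorem prodOneAdd_scalar (q p : ℕ) (hpq : p < q) : prodOneAdd q p = 1 := by
  unfold prodOneAdd
  rw [Finset.Icc_eq_empty (by omega), Finset.prod_empty]

theorem prodOneAdd_rec (q p : ℕ) (hqp : q ≤ p) :
    prodOneAdd q p = (1 + bR * Xv q) * prodOneAdd (q+1) p := by
  unfold prodOneAdd
  rw [Finset.Icc_eq_cons_Ioc hqp, Finset.prod_cons, ← Finset.Icc_add_one_left_eq_Ioc]

/-- finite-sum approximation to `Gsk` -/
def GskN (p q : ℕ) (m : ℤ) (N : ℕ) : R :=
  ∑ s ∈ Finset.range N, (-bR)^s * (prodOneAdd q p * hsym q p (m + s))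

theorem negbR_pow (s : ℕ) : (-bR)^s = MvPowerSeries.C (σ := ℕ) (R := A) ((-Polynomial.X)^s) := by
  rw [bR, ← map_neg, ← map_pow]

theorem GskN_coeff (p q : ℕ) (m : ℤ) (N : ℕ) (d : ℕ →₀ ℕ) :
    MvPowerSeries.coeff (R := A) d (GskN p q m N) =
      ∑ s ∈ Finset.range N,
        (-Polynomial.X : A)^s * MvPowerSeries.coeff (R := A) d (prodOneAdd q p * hsym q p (m + s)) := by
  unfold GskN
  rw [map_sum]
  exact Finset.sum_congr rfl fun s _ => by rw [negbR_pow, CA_mul_coeff]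

/-- coefficient-level vanishing for high-degree parts -/
theorem GskN_coeff_zero (p q : ℕ) (m : ℤ) (N : ℕ) (d : ℕ →₀ ℕ)
    (h : (degSum d : ℤ) < m) : MvPowerSeries.coeff (R := A) d (GskN p q m N) = 0 := by
  rw [GskN_coeff]
  apply Finset.sum_eq_zero
  intro s _
  rw [coeff_mul_hsym_eq_zero _ _ _ _ _ (by omega), mul_zero]

theorem Gsk_coeff_approx (p q : ℕ) (m : ℤ) (N : ℕ) (d : ℕ →₀ ℕ)
    (hN : ((degSum d : ℤ) - m).toNat < N) :
    MvPowerSeries.coeff (R := A) d (Gsk p q m) = MvPowerSeries.coeff (R := A) d (GskN p q m N) := by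
  rw [GskN_coeff]
  rw [coeff_eq, Gsk]
  apply Finset.sum_subset
  · intro s hs
    rw [Finset.mem_range] at *
    omega
  · intro s _ hs
    rw [Finset.mem_range, not_lt] at hs
    rw [coeff_mul_hsym_eq_zero _ _ _ _ _ (by omega), mul_zero]

theorem GskN_scalar (p q : ℕ) (hpq : p < q) (m : ℤ) (N : ℕ) :
    GskN p q m N = if m ≤ 0 ∧ (-m).toNat < N
      then MvPowerSeries.C (σ := ℕ) (R := A) ((-Polynomial.X)^(-m).toNat) else 0 := by
  unfold GskN
  rw [prodOneAdd_scalar q p hpq]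
  have hterm : ∀ s : ℕ, (-bR)^s * ((1 : R) * hsym q p (m + s)) =
      if m + s = 0 then (-bR)^s else 0 := by
    intro s
    rw [one_mul, hsym_scalar q p hpq]
    split <;> simp
  rw [Finset.sum_congr rfl fun s _ => hterm s]
  by_cases hm : m ≤ 0 ∧ (-m).toNat < N
  · rw [if_pos hm]
    rw [Finset.sum_eq_single_of_mem (-m).toNat (Finset.mem_range.2 hm.2)]
    · rw [if_pos (by omega), negbR_pow]
    · intro s _ hs
      rw [if_neg (by omega)]
  · rw [if_neg hm]
    apply Finset.sum_eq_zero
    intro s hs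
    rw [Finset.mem_range] at hs
    rw [if_neg (by omega)]

theorem GskN_rec (p q : ℕ) (hqp : q ≤ p) (m : ℤ) (N : ℕ) :
    (1 + bR * Xv q) * GskN p (q+1) m N = GskN p q m N - Xv q * GskN p q (m-1) N := by
  have key : ∀ s : ℕ, (1 + bR * Xv q) * ((-bR)^s * (prodOneAdd (q+1) p * hsym (q+1) p (m + s)))
      = (-bR)^s * (prodOneAdd q p * hsym q p (m + s))
        - Xv q * ((-bR)^s * (prodOneAdd q p * hsym q p (m - 1 + s))) := by
    intro s
    have h2 : hsym (q+1) p (m+s) = hsym q p (m+s) - Xv q * hsym q p (m - 1 + s) := by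
      have h1 := hsym_rec q p hqp (m + s)
      have he : m + s - 1 = m - 1 + s := by ring
      rw [he] at h1
      rw [h1]; ring
    rw [prodOneAdd_rec q p hqp, h2]; ring
  unfold GskN
  rw [Finset.mul_sum, Finset.sum_congr rfl fun s _ => key s, Finset.sum_sub_distrib,
    ← Finset.mul_sum]

theorem intChoose_zero (c : ℤ) : intChoose c 0 = 1 := by
  unfold intChoose
  split <;> simp

theorem intChoose_nonneg_eq (c : ℤ) (hc : 0 ≤ c) (s : ℕ) :
    intChoose c s = (c.toNat.choose s : ℤ) := by
  unfold intChoose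
  rw [if_pos hc]

theorem intChoose_eq_zero_of_lt {c : ℤ} {s : ℕ} (hc : 0 ≤ c) (hs : c < s) :
    intChoose c s = 0 := by
  rw [intChoose_nonneg_eq c hc]
  rw [Nat.choose_eq_zero_of_lt (by omega)]
  rfl

theorem intChoose_pascal (c : ℤ) (s : ℕ) :
    intChoose (c+1) (s+1) = intChoose c (s+1) + intChoose c s := by
  unfold intChoose
  rcases lt_trichotomy c (-1) with hc | hc | hc
  · rw [if_neg (by omega), if_neg (by omega), if_neg (by omega)]
    have hA : ((((s+1:ℕ)):ℤ) - 1 - c).toNat = ((((s+1:ℕ)):ℤ) - 1 - (c+1)).toNat + 1 := by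
      push_cast; omega
    have hB : (((s:ℕ):ℤ) - 1 - c).toNat = ((((s+1:ℕ)):ℤ) - 1 - (c+1)).toNat := by
      push_cast; omega
    rw [hA, hB]
    set B := ((((s+1:ℕ)):ℤ) - 1 - (c+1)).toNat
    rw [Nat.choose_succ_succ' B s]
    push_cast
    ring
  · subst hc
    rw [if_pos (by omega), if_neg (by omega), if_neg (by omega)]
    have h1 : ((-1:ℤ) + 1).toNat = 0 := by omega
    rw [h1, Nat.choose_eq_zero_of_lt (by omega)]
    have hA : ((((s+1:ℕ)):ℤ) - 1 - (-1)).toNat = s + 1 := by push_cast; omega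
    have hB : (((s:ℕ):ℤ) - 1 - (-1)).toNat = s := by push_cast; omega
    rw [hA, hB, Nat.choose_self, Nat.choose_self]
    push_cast
    ring
  · rw [if_pos (by omega), if_pos (by omega), if_pos (by omega)]
    have hA : (c + 1).toNat = c.toNat + 1 := by omega
    rw [hA, Nat.choose_succ_succ c.toNat s]
    push_cast
    ring

theorem alternating_sum_intChoose {c : ℤ} (hc : 1 ≤ c) {T : ℕ} (hT : c ≤ T) :
    ∑ s ∈ Finset.range (T+1), (-1:ℤ)^s * intChoose c s = 0 := by
  have hsub : Finset.range (c.toNat + 1) ⊆ Finset.range (T+1) := by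
    apply Finset.range_subset_range.2; omega
  rw [← Finset.sum_subset hsub (fun s _ hs => by
    rw [Finset.mem_range, not_lt] at hs
    rw [intChoose_eq_zero_of_lt (by omega) (by omega), mul_zero])]
  have := Int.alternating_sum_range_choose (n := c.toNat)
  rw [if_neg (by omega)] at this
  rw [← this]
  exact Finset.sum_congr rfl fun s _ => by rw [intChoose_nonneg_eq c (by omega)]

theorem Gsk_coeff (p q : ℕ) (m : ℤ) (d : ℕ →₀ ℕ) :
    MvPowerSeries.coeff (R := A) d (Gsk p q m) =
      ∑ s ∈ Finset.range (((degSum d : ℤ) - m).toNat + 1),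
        (-Polynomial.X : A) ^ s * MvPowerSeries.coeff (R := A) d (prodOneAdd q p * hsym q p (m + s)) := rfl

theorem JT_coeff (p q : ℕ) (c m : ℤ) (d : ℕ →₀ ℕ) :
    MvPowerSeries.coeff (R := A) d (JT p q c m) =
      ∑ s ∈ Finset.range (((degSum d : ℤ) - m).toNat + 1),
        ((intChoose c s : ℤ) : A) * Polynomial.X ^ s
          * MvPowerSeries.coeff (R := A) d (Gsk p q (m + s)) := rfl

/-- `G_{-n} = (-β)^n G_0` -/
theorem Gsk_shift (p q : ℕ) (m : ℤ) (hm : m ≤ 0) :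
    Gsk p q m = (-bR)^(-m).toNat * Gsk p q 0 := by
  refine Rext fun d => ?_
  rw [negbR_pow, CA_mul_coeff, Gsk_coeff, Gsk_coeff]
  set n := degSum d
  set t := (-m).toNat with ht
  have hrange : ((n : ℤ) - m).toNat + 1 = t + (((n:ℤ) - 0).toNat + 1) := by omega
  rw [hrange, Finset.sum_range_add]
  have hzero : ∀ s ∈ Finset.range t, (-Polynomial.X : A)^s
      * MvPowerSeries.coeff (R := A) d (prodOneAdd q p * hsym q p (m + s)) = 0 := by
    intro s hs
    rw [Finset.mem_range] at hs
    rw [hsym_neg q p (m+s) (by omega), mul_zero, map_zero, mul_zero]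
  rw [Finset.sum_eq_zero hzero, zero_add, Finset.mul_sum]
  apply Finset.sum_congr rfl
  intro u _
  have harg : m + ((t + u : ℕ) : ℤ) = 0 + u := by push_cast; omega
  rw [harg, pow_add]
  ring

/-- entry vanishing (E1): `JT(p,q,c,m) = 0` when `c ≥ 1` and `m + c ≤ 0` -/
theorem JT_zero_shape (p q : ℕ) (c m : ℤ) (hc : 1 ≤ c) (hmc : m + c ≤ 0) :
    JT p q c m = 0 := by
  refine Rext fun d => ?_
  rw [JT_coeff, map_zero]
  set n := degSum d
  set t := (-m).toNat with ht
  have hm : m ≤ 0 := by omega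
  set G0 := MvPowerSeries.coeff (R := A) d (Gsk p q 0) with hG0
  have hterm : ∀ s ∈ Finset.range (((n:ℤ) - m).toNat + 1),
      ((intChoose c s : ℤ) : A) * Polynomial.X ^ s
          * MvPowerSeries.coeff (R := A) d (Gsk p q (m + s)) =
      ((((-1:ℤ)^(t+s) * intChoose c s : ℤ) : A)) * (Polynomial.X ^ t * G0) := by
    intro s hs
    by_cases hst : s ≤ t
    · rw [Gsk_shift p q (m + s) (by omega), negbR_pow, CA_mul_coeff]
      have h1 : (-(m + s)).toNat = t - s := by omega
      rw [h1, ← hG0]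
      have h2 : (-1:A)^(t+s) = (-1)^(t-s) := by
        rw [show t+s = (t-s)+2*s by omega, pow_add, pow_mul]
        simp
      have h4 : Polynomial.X^s * Polynomial.X^(t-s) = (Polynomial.X : A)^t := by
        rw [← pow_add]
        congr 1
        omega
      push_cast
      rw [h2]
      calc (intChoose c s : A) * Polynomial.X ^ s * ((-Polynomial.X)^(t-s) * G0)
          = ((-1:A)^(t-s) * (intChoose c s : A)) * ((Polynomial.X^s * Polynomial.X^(t-s)) * G0)
            := by rw [neg_pow]; ring
        _ = (-1)^(t-s) * (intChoose c s : A) * (Polynomial.X^t * G0) := by rw [h4]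
    · have hz : intChoose c s = 0 := intChoose_eq_zero_of_lt (by omega) (by omega)
      rw [hz]
      push_cast
      ring
  rw [Finset.sum_congr rfl hterm, ← Finset.sum_mul]
  have hsum : (∑ s ∈ Finset.range (((n:ℤ) - m).toNat + 1),
      (((-1:ℤ)^(t+s) * intChoose c s : ℤ) : A)) = 0 := by
    rw [← Int.cast_sum]
    have : (∑ s ∈ Finset.range (((n:ℤ) - m).toNat + 1), ((-1:ℤ)^(t+s) * intChoose c s)) =
        (-1:ℤ)^t * ∑ s ∈ Finset.range (((n:ℤ) - m).toNat + 1), ((-1:ℤ)^s * intChoose c s) := by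
      rw [Finset.mul_sum]
      exact Finset.sum_congr rfl fun s _ => by rw [pow_add]; ring
    rw [this, alternating_sum_intChoose hc (by omega), mul_zero, Int.cast_zero]
  rw [hsum, zero_mul]

theorem Gsk_scalar_pos (p q : ℕ) (hpq : p < q) (m : ℤ) (hm : 0 < m) : Gsk p q m = 0 := by
  refine Rext fun d => ?_
  rw [Gsk_coeff, map_zero]
  apply Finset.sum_eq_zero
  intro s _
  rw [prodOneAdd_scalar q p hpq, hsym_scalar q p hpq, if_neg (by omega), mul_zero, map_zero,
    mul_zero]

/-- entry vanishing (E2): `JT(p,q,c,m) = 0` when `p < q` and `m > 0` -/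
theorem JT_zero_scalar (p q : ℕ) (c m : ℤ) (hpq : p < q) (hm : 0 < m) :
    JT p q c m = 0 := by
  refine Rext fun d => ?_
  rw [JT_coeff, map_zero]
  apply Finset.sum_eq_zero
  intro s _
  rw [Gsk_scalar_pos p q hpq (m + s) (by omega), map_zero, mul_zero]

/-- finite-sum approximation to `JT` -/
def JTN (p q : ℕ) (c m : ℤ) (N : ℕ) : R :=
  ∑ s ∈ Finset.range N,
    MvPowerSeries.C (σ := ℕ) (R := A) (((intChoose c s : ℤ) : A) * Polynomial.X^s) * GskN p q (m+s) N

theorem JTN_coeff (p q : ℕ) (c m : ℤ) (N : ℕ) (d : ℕ →₀ ℕ) :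
    MvPowerSeries.coeff (R := A) d (JTN p q c m N) =
      ∑ s ∈ Finset.range N, ((intChoose c s : ℤ) : A) * Polynomial.X^s
        * MvPowerSeries.coeff (R := A) d (GskN p q (m+s) N) := by
  unfold JTN
  rw [map_sum]
  exact Finset.sum_congr rfl fun s _ => by rw [CA_mul_coeff]

theorem JT_coeff_approx (p q : ℕ) (c m : ℤ) (N : ℕ) (d : ℕ →₀ ℕ)
    (hN : ((degSum d : ℤ) - m).toNat < N) :
    MvPowerSeries.coeff (R := A) d (JT p q c m) = MvPowerSeries.coeff (R := A) d (JTN p q c m N) := by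
  rw [JTN_coeff, JT_coeff]
  have hcong : ∀ s ∈ Finset.range (((degSum d : ℤ) - m).toNat + 1),
      ((intChoose c s : ℤ) : A) * Polynomial.X^s * MvPowerSeries.coeff (R := A) d (Gsk p q (m+s)) =
      ((intChoose c s : ℤ) : A) * Polynomial.X^s * MvPowerSeries.coeff (R := A) d (GskN p q (m+s) N) := by
    intro s hs
    rw [Finset.mem_range] at hs
    rw [Gsk_coeff_approx p q (m+s) N d (by omega)]
  rw [Finset.sum_congr rfl hcong]
  apply Finset.sum_subset
  · intro s hs
    rw [Finset.mem_range] at *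
    omega
  · intro s _ hs
    rw [Finset.mem_range, not_lt] at hs
    rw [GskN_coeff_zero p q (m+s) N d (by omega), mul_zero]

/-- N-level Pascal identity with explicit edge term -/
theorem JTN_pascal (p q : ℕ) (c m : ℤ) (N : ℕ) :
    JTN p q (c+1) m (N+1) = JTN p q c m (N+1) + bR * JTN p q c (m+1) (N+1)
      - bR * (MvPowerSeries.C (σ := ℕ) (R := A) (((intChoose c N : ℤ) : A) * Polynomial.X^N)
          * GskN p q (m+1+N) (N+1)) := by
  unfold JTN
  rw [Finset.sum_range_succ' (fun s => MvPowerSeries.C (σ := ℕ) (R := A) (((intChoose (c+1) s : ℤ) : A)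
    * Polynomial.X^s) * GskN p q (m+s) (N+1)) N]
  rw [Finset.sum_range_succ' (fun s => MvPowerSeries.C (σ := ℕ) (R := A) (((intChoose c s : ℤ) : A)
    * Polynomial.X^s) * GskN p q (m+s) (N+1)) N]
  rw [Finset.mul_sum, Finset.sum_range_succ
    (fun s => bR * (MvPowerSeries.C (σ := ℕ) (R := A) (((intChoose c s : ℤ) : A)
      * Polynomial.X^s) * GskN p q (m+1+s) (N+1)))]
  have h0 : intChoose (c+1) 0 = intChoose c 0 := by rw [intChoose_zero, intChoose_zero]
  have hterm : ∀ u : ℕ, MvPowerSeries.C (σ := ℕ) (R := A) (((intChoose (c+1) (u+1) : ℤ) : A)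
        * Polynomial.X^(u+1)) * GskN p q (m+((u+1:ℕ):ℤ)) (N+1)
      = MvPowerSeries.C (σ := ℕ) (R := A) (((intChoose c (u+1) : ℤ) : A) * Polynomial.X^(u+1))
          * GskN p q (m+((u+1:ℕ):ℤ)) (N+1)
        + bR * (MvPowerSeries.C (σ := ℕ) (R := A) (((intChoose c u : ℤ) : A) * Polynomial.X^u)
          * GskN p q (m+1+u) (N+1)) := by
    intro u
    have harg : m + ((u+1 : ℕ) : ℤ) = m + 1 + u := by push_cast; ring
    rw [harg, intChoose_pascal c u]
    have hcast : ((intChoose c (u+1) + intChoose c u : ℤ) : A)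
        = ((intChoose c (u+1) : ℤ) : A) + ((intChoose c u : ℤ) : A) := by push_cast; ring
    rw [hcast, add_mul, map_add, add_mul]
    congr 1
    have hX : ((intChoose c u : ℤ) : A) * Polynomial.X^(u+1)
        = Polynomial.X * (((intChoose c u : ℤ) : A) * Polynomial.X^u) := by
      rw [pow_succ]; ring
    rw [hX, map_mul, bR]
    ring
  rw [Finset.sum_congr rfl (fun u _ => hterm u), Finset.sum_add_distrib, h0]
  abel

/-- N-level recursion identity, flagged case `q ≤ p` -/
theorem JTN_rec (p q : ℕ) (hqp : q ≤ p) (c m : ℤ) (N : ℕ) :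
    (1 + bR * Xv q) * JTN p (q+1) c m N
      = JTN p q c m N - Xv q * JTN p q c (m-1) N := by
  unfold JTN
  rw [Finset.mul_sum, Finset.mul_sum]
  rw [← Finset.sum_sub_distrib]
  apply Finset.sum_congr rfl
  intro s _
  have harg : m - 1 + (s : ℤ) = m + s - 1 := by ring
  rw [harg]
  have := GskN_rec p q hqp (m + s) N
  calc (1 + bR * Xv q) * (MvPowerSeries.C (σ := ℕ) (R := A) (((intChoose c s : ℤ) : A) * Polynomial.X^s)
        * GskN p (q+1) (m+s) N)
      = MvPowerSeries.C (σ := ℕ) (R := A) (((intChoose c s : ℤ) : A) * Polynomial.X^s)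
        * ((1 + bR * Xv q) * GskN p (q+1) (m+s) N) := by ring
    _ = MvPowerSeries.C (σ := ℕ) (R := A) (((intChoose c s : ℤ) : A) * Polynomial.X^s)
        * (GskN p q (m+s) N - Xv q * GskN p q (m+s-1) N) := by rw [this]
    _ = _ := by ring

/-- scalar defect for the geometric-type series -/
theorem GskN_defect (p q : ℕ) (hpq : p < q) (j : ℤ) (N : ℕ) (hN : 1 ≤ N) :
    bR * GskN p q j N + GskN p q (j-1) N
      = if j = 1 then 1 else if j = 1-(N:ℤ) then -(-bR)^N else 0 := by
  rw [GskN_scalar p q hpq j N, GskN_scalar p q hpq (j-1) N]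
  by_cases h1 : j = 1
  · subst h1
    rw [if_neg (by omega), if_pos (by constructor <;> omega), if_pos rfl]
    norm_num
  · rw [if_neg h1]
    by_cases h2 : j = 1 - (N:ℤ)
    · subst h2
      rw [if_pos (by constructor <;> omega), if_neg (by omega), if_pos rfl]
      have harg : (-(1 - (N:ℤ))).toNat = N - 1 := by omega
      rw [harg, add_zero, bR, ← map_mul]
      have hpow : Polynomial.X * (-Polynomial.X : A)^(N-1) = -(-Polynomial.X)^N := by
        have hh : Polynomial.X * (-Polynomial.X : A)^(N-1)
            = -((-Polynomial.X)^(N-1) * (-Polynomial.X)) := by ring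
        rw [hh, ← pow_succ, Nat.sub_add_cancel hN]
      rw [hpow, map_neg, ← negbR_pow]
      rfl
    · rw [if_neg h2]
      by_cases h3 : j ≤ 0 ∧ (-j).toNat < N
      · rw [if_pos h3, if_pos (by constructor <;> omega)]
        have harg : (-(j-1)).toNat = (-j).toNat + 1 := by omega
        rw [harg, bR, ← map_mul, ← map_add]
        have hz : Polynomial.X * (-Polynomial.X : A)^(-j).toNat
            + (-Polynomial.X)^((-j).toNat + 1) = 0 := by rw [pow_succ]; ring
        rw [hz, map_zero]
      · rw [if_neg h3, mul_zero, zero_add, if_neg (by omega)]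

/-- the defect term in the main recursion -/
def JTdef (q p : ℕ) (c m : ℤ) : R :=
  if p < q ∧ m ≤ 1 then
    Xv q * MvPowerSeries.C (σ := ℕ) (R := A) (((intChoose c ((1-m).toNat) : ℤ) : A)
      * Polynomial.X^((1-m).toNat))
  else 0

/-- N-level star identity, uniform in `p`, `q` -/
theorem JTN_star (p q : ℕ) (c m : ℤ) (N : ℕ) (hN1 : 1 ≤ N) (hN : 1 - m < (N:ℤ)) :
    (1 + bR * Xv q) * JTN p (q+1) c m N
      = JTN p q c m N - Xv q * JTN p q c (m-1) N + JTdef q p c m := by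
  by_cases hpq : q ≤ p
  · rw [JTN_rec p q hpq c m N, JTdef, if_neg (by push_neg; intro h; omega), add_zero]
  · push_neg at hpq
    have hGeq : ∀ j : ℤ, GskN p (q+1) j N = GskN p q j N := by
      intro j
      rw [GskN_scalar p (q+1) (by omega) j N, GskN_scalar p q hpq j N]
    have hterm : ∀ s : ℕ, (1 + bR * Xv q) * (MvPowerSeries.C (σ := ℕ) (R := A)
          (((intChoose c s : ℤ) : A) * Polynomial.X^s) * GskN p (q+1) (m+s) N)
        = MvPowerSeries.C (σ := ℕ) (R := A) (((intChoose c s : ℤ) : A) * Polynomial.X^s)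
            * GskN p q (m+s) N
          - Xv q * (MvPowerSeries.C (σ := ℕ) (R := A) (((intChoose c s : ℤ) : A) * Polynomial.X^s)
            * GskN p q (m-1+s) N)
          + Xv q * (MvPowerSeries.C (σ := ℕ) (R := A) (((intChoose c s : ℤ) : A) * Polynomial.X^s)
            * (if m + s = 1 then 1 else if m + s = 1-(N:ℤ) then -(-bR)^N else 0)) := by
      intro s
      have hdef := GskN_defect p q hpq (m+s) N hN1
      have harg : m - 1 + (s:ℤ) = m + s - 1 := by ring
      rw [hGeq, harg]
      calc (1 + bR * Xv q) * (MvPowerSeries.C (σ := ℕ) (R := A)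
            (((intChoose c s : ℤ) : A) * Polynomial.X^s) * GskN p q (m+s) N)
          = MvPowerSeries.C (σ := ℕ) (R := A) (((intChoose c s : ℤ) : A) * Polynomial.X^s)
              * GskN p q (m+s) N
            + Xv q * (MvPowerSeries.C (σ := ℕ) (R := A) (((intChoose c s : ℤ) : A) * Polynomial.X^s)
              * (bR * GskN p q (m+s) N + GskN p q (m+s-1) N))
            - Xv q * (MvPowerSeries.C (σ := ℕ) (R := A) (((intChoose c s : ℤ) : A) * Polynomial.X^s)
              * GskN p q (m+s-1) N) := by ring
        _ = _ := by rw [hdef]; ring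
    unfold JTN
    rw [Finset.mul_sum, Finset.sum_congr rfl (fun s _ => hterm s), Finset.sum_add_distrib,
      Finset.sum_sub_distrib, ← Finset.mul_sum, ← Finset.mul_sum]
    congr 1
    rw [JTdef]
    by_cases hm : m ≤ 1
    · rw [if_pos ⟨hpq, hm⟩]
      congr 1
      rw [Finset.sum_eq_single_of_mem ((1-m).toNat) (Finset.mem_range.2 (by omega))]
      · rw [if_pos (by omega), mul_one]
      · intro s _ hs
        rw [if_neg (by omega), if_neg (by omega), mul_zero]
    · rw [if_neg (by push_neg; intro h; omega)]
      rw [Finset.sum_eq_zero, mul_zero]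
      intro s hs
      rw [if_neg (by omega), if_neg (by omega), mul_zero]

/-- two series agreeing on all coefficients below a monomial `d` -/
def CoeffBelow (d : ℕ →₀ ℕ) (fq gq : R) : Prop :=
  ∀ d', d' ≤ d → MvPowerSeries.coeff (R := A) d' fq = MvPowerSeries.coeff (R := A) d' gq

theorem CoeffBelow.mul_left {d : ℕ →₀ ℕ} {fq gq : R} (h : CoeffBelow d fq gq) (u : R) :
    CoeffBelow d (u * fq) (u * gq) := by
  intro d' hd'
  classical
  rw [MvPowerSeries.coeff_mul, MvPowerSeries.coeff_mul]
  apply Finset.sum_congr rfl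
  intro x hx
  have hx2 : x.1 + x.2 = d' := Finset.HasAntidiagonal.mem_antidiagonal.mp hx
  have : x.2 ≤ d := le_trans (le_trans (by rw [← hx2]; exact self_le_add_left _ _) le_rfl) hd'
  rw [h x.2 this]

theorem coeff_mul_GskN_zero (p q : ℕ) (J : ℤ) (N : ℕ) (u : R) {d d' : ℕ →₀ ℕ}
    (hd' : d' ≤ d) (hJ : (degSum d : ℤ) < J) :
    MvPowerSeries.coeff (R := A) d' (u * GskN p q J N) = 0 := by
  classical
  rw [MvPowerSeries.coeff_mul]
  apply Finset.sum_eq_zero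
  intro x hx
  have hx2 : x.1 + x.2 = d' := Finset.HasAntidiagonal.mem_antidiagonal.mp hx
  have hle : x.2 ≤ d := le_trans (by rw [← hx2]; exact self_le_add_left _ _) hd'
  have : (degSum x.2 : ℤ) < J := by
    have := degSum_le_of_le hle
    omega
  rw [GskN_coeff_zero p q J N x.2 this, mul_zero]

theorem JT_coeffBelow (p q : ℕ) (c m : ℤ) (N : ℕ) (d : ℕ →₀ ℕ)
    (hN : ((degSum d : ℤ) - m).toNat < N) :
    CoeffBelow d (JT p q c m) (JTN p q c m N) := by
  intro d' hd'
  have := degSum_le_of_le hd'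
  exact JT_coeff_approx p q c m N d' (by omega)

/-- the main recursion for the entries `JT`, with defect term -/
theorem JT_star (p q : ℕ) (c m : ℤ) :
    (1 + bR * Xv q) * JT p (q+1) c m
      = (1 + bR * Xv q) * JT p q c m - Xv q * JT p q (c+1) (m-1) + JTdef q p c m := by
  refine Rext fun d => ?_
  set n := degSum d with hn
  set N0 : ℕ := ((n:ℤ) + 2 - m).toNat + n + 1 with hN0
  set N : ℕ := N0 + 1 with hNdef
  have hN1 : 1 ≤ N := by omega
  have hNm : 1 - m < (N:ℤ) := by
    have : ((n:ℤ) + 2 - m).toNat ≥ (n:ℤ) + 2 - m := Int.self_le_toNat _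
    push_cast
    omega
  have hbig1 : ((n:ℤ) - m).toNat < N := by omega
  have hbig2 : ((n:ℤ) - (m-1)).toNat < N := by omega
  have h1 := JT_coeffBelow p (q+1) c m N d hbig1
  have h2 := JT_coeffBelow p q c m N d hbig1
  have h3 := JT_coeffBelow p q (c+1) (m-1) N d hbig2
  have hEN : (n : ℤ) < m - 1 + 1 + N0 := by
    have : ((n:ℤ) + 2 - m).toNat ≥ (n:ℤ) + 2 - m := Int.self_le_toNat _
    push_cast
    omega
  set EN : R := MvPowerSeries.C (σ := ℕ) (R := A) (((intChoose c N0 : ℤ) : A) * Polynomial.X^N0)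
    * GskN p q (m-1+1+N0) N with hENdef
  have hP : JTN p q c (m-1) N = JTN p q (c+1) (m-1) N - bR * JTN p q c m N + bR * EN := by
    have hpas := JTN_pascal p q c (m-1) N0
    have harg : m - 1 + 1 = m := by ring
    rw [harg] at hpas
    rw [hENdef, ← hNdef] at *
    have harg2 : m - 1 + 1 + (N0:ℤ) = m + N0 := by ring
    rw [harg2]
    linear_combination -hpas
  have hstar := JTN_star p q c m N hN1 hNm
  calc MvPowerSeries.coeff (R := A) d ((1 + bR * Xv q) * JT p (q+1) c m)
      = MvPowerSeries.coeff (R := A) d ((1 + bR * Xv q) * JTN p (q+1) c m N) :=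
        (h1.mul_left _) d le_rfl
    _ = MvPowerSeries.coeff (R := A) d (JTN p q c m N - Xv q * JTN p q c (m-1) N + JTdef q p c m) := by
        rw [hstar]
    _ = MvPowerSeries.coeff (R := A) d ((1 + bR * Xv q) * JTN p q c m N
          - Xv q * JTN p q (c+1) (m-1) N + JTdef q p c m - Xv q * (bR * EN)) := by
        rw [hP]
        congr 1
        ring
    _ = MvPowerSeries.coeff (R := A) d ((1 + bR * Xv q) * JTN p q c m N
          - Xv q * JTN p q (c+1) (m-1) N + JTdef q p c m) := by
        rw [map_sub]
        rw [show Xv q * (bR * EN) = (Xv q * bR) * EN by ring]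
        rw [hENdef, show (Xv q * bR) * (MvPowerSeries.C (σ := ℕ) (R := A) (((intChoose c N0 : ℤ) : A)
          * Polynomial.X^N0) * GskN p q (m-1+1+N0) N)
          = (Xv q * bR * MvPowerSeries.C (σ := ℕ) (R := A) (((intChoose c N0 : ℤ) : A) * Polynomial.X^N0))
            * GskN p q (m-1+1+N0) N by ring]
        rw [coeff_mul_GskN_zero p q (m-1+1+N0) N _ (le_refl d) hEN, sub_zero]
    _ = MvPowerSeries.coeff (R := A) d ((1 + bR * Xv q) * JT p q c m
          - Xv q * JT p q (c+1) (m-1) + JTdef q p c m) := by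
        rw [map_add, map_add, map_sub, map_sub]
        rw [(h2.mul_left (1 + bR * Xv q)) d le_rfl, (h3.mul_left (Xv q)) d le_rfl]

/-- pigeonhole vanishing: a set of rows supported on fewer columns kills the determinant -/
theorem det_eq_zero_of_rows_supported {r : ℕ} (M : Matrix (Fin r) (Fin r) R)
    (Rows Cols : Finset (Fin r)) (hcard : Cols.card < Rows.card)
    (hsupp : ∀ t ∈ Rows, ∀ j ∉ Cols, M t j = 0) : M.det = 0 := by
  classical
  rw [Matrix.det_apply]
  apply Finset.sum_eq_zero
  intro σ _
  have hex : ∃ j, σ j ∈ Rows ∧ j ∉ Cols := by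
    by_contra h
    push_neg at h
    have hsub : Rows ⊆ Finset.image σ Cols := by
      intro t ht
      refine Finset.mem_image.2 ⟨σ.symm t, h _ (by simp [ht]), by simp⟩
    have h1 := Finset.card_le_card hsub
    have h2 := Finset.card_image_le (f := σ) (s := Cols)
    omega
  obtain ⟨j, hj1, hj2⟩ := hex
  have hz : (∏ i, M (σ i) i) = 0 :=
    Finset.prod_eq_zero (Finset.mem_univ j) (hsupp _ hj1 _ hj2)
  rw [hz, smul_zero]

theorem one_add_bXv_isUnit (q : ℕ) : IsUnit (1 + bR * Xv q) := by
  rw [MvPowerSeries.isUnit_iff_constantCoeff]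
  have : MvPowerSeries.constantCoeff (σ := ℕ) (R := A) (1 + bR * Xv q) = 1 := by
    rw [map_add, map_one]
    have : MvPowerSeries.constantCoeff (σ := ℕ) (R := A) (bR * Xv q)
        = MvPowerSeries.coeff (R := A) (0 : ℕ →₀ ℕ) (bR * Xv q) := rfl
    rw [this, bR_mul_coeff]
    have : MvPowerSeries.coeff (R := A) (0 : ℕ →₀ ℕ) (Xv q) = 0 := by
      rw [Xv, MvPowerSeries.coeff_zero_X]
    rw [this, mul_zero, add_zero]
  rw [this]
  exact isUnit_one

/-- extension of a `Fin r` tuple to `ℕ` -/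
def extN (r : ℕ) (v : Fin r → ℕ) : ℕ → ℕ := fun t => if h : t < r then v ⟨t, h⟩ else 0

theorem extN_coe (r : ℕ) (v : Fin r → ℕ) (i : Fin r) : extN r v (i : ℕ) = v i := by
  unfold extN
  rw [dif_pos i.isLt]

/-- monotonicity of the flags along a chain of overlapping rows -/
theorem chain_mono (r : ℕ) (lam mu f g : Fin r → ℕ)
    (hflag : ∀ (i : Fin r) (h : (i : ℕ) + 1 < r), mu i < lam ⟨(i : ℕ) + 1, h⟩ →
      g i ≤ g ⟨(i : ℕ) + 1, h⟩ ∧ f i ≤ f ⟨(i : ℕ) + 1, h⟩)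
    (t t' : ℕ) (ht : t ≤ t') (ht' : t' < r)
    (hchain : ∀ u, t ≤ u → u < t' → extN r mu u < extN r lam (u+1)) :
    extN r f t ≤ extN r f t' ∧ extN r g t ≤ extN r g t' := by
  induction t' with
  | zero =>
    have : t = 0 := by omega
    subst this
    exact ⟨le_rfl, le_rfl⟩
  | succ t'' ih =>
    rcases Nat.lt_or_ge t (t''+1) with hlt | hge
    · have ht'' : t'' < r := by omega
      have hstep := hflag ⟨t'', ht''⟩ (by simpa using ht')
      have hcoe : ((⟨t'', ht''⟩ : Fin r) : ℕ) = t'' := rfl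
      have hch := hchain t'' (by omega) (by omega)
      rw [show extN r mu t'' = mu ⟨t'', ht''⟩ from by unfold extN; rw [dif_pos ht''],
        show extN r lam (t''+1) = lam ⟨t''+1, ht'⟩ from by unfold extN; rw [dif_pos ht']] at hch
      have hstep2 := hstep hch
      have hf1 : extN r f (t''+1) = f ⟨t''+1, ht'⟩ := by unfold extN; rw [dif_pos ht']
      have hg1 : extN r g (t''+1) = g ⟨t''+1, ht'⟩ := by unfold extN; rw [dif_pos ht']
      have hf0 : extN r f t'' = f ⟨t'', ht''⟩ := by unfold extN; rw [dif_pos ht'']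
      have hg0 : extN r g t'' = g ⟨t'', ht''⟩ := by unfold extN; rw [dif_pos ht'']
      have ihres := ih (by omega) (by omega) (fun u hu hu' => hchain u hu (by omega))
      constructor
      · calc extN r f t ≤ extN r f t'' := ihres.1
          _ ≤ extN r f (t''+1) := by rw [hf0, hf1]; exact hstep2.2
      · calc extN r g t ≤ extN r g t'' := ihres.2
          _ ≤ extN r g (t''+1) := by rw [hg0, hg1]; exact hstep2.1
    · have : t = t'' + 1 := by omega
      subst this
      exact ⟨le_rfl, le_rfl⟩

theorem extN_anti (r : ℕ) (v : Fin r → ℕ)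
    (hanti : ∀ i j : Fin r, i ≤ j → v j ≤ v i)
    (u u' : ℕ) (huu : u ≤ u') (hu' : u' < r) : extN r v u' ≤ extN r v u := by
  unfold extN
  rw [dif_pos hu', dif_pos (by omega : u < r)]
  exact hanti _ _ (by simpa using huu)

/-- The blocked-shape vanishing lemma: if some row has boxes but empty value range,
the Jacobi–Trudi determinant vanishes. -/
theorem det_zero_of_blocked (r : ℕ) (lam mu f g G : Fin r → ℕ)
    (hlam_anti : ∀ i j : Fin r, i ≤ j → lam j ≤ lam i)
    (hmu_anti : ∀ i j : Fin r, i ≤ j → mu j ≤ mu i)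
    (hflag : ∀ (i : Fin r) (h : (i : ℕ) + 1 < r), mu i < lam ⟨(i : ℕ) + 1, h⟩ →
      g i ≤ g ⟨(i : ℕ) + 1, h⟩ ∧ f i ≤ f ⟨(i : ℕ) + 1, h⟩)
    (hGge : ∀ j, g j ≤ G j)
    (i : Fin r) (hfi : f i < g i) (hmui : mu i < lam i) :
    (Matrix.of fun t j : Fin r =>
      JT (f t) (G j) ((t : ℤ) - (j : ℤ))
        ((lam t : ℤ) - (mu j : ℤ) + (j : ℤ) - (t : ℤ))).det = 0 := by
  classical
  set i0 := (i : ℕ) with hi0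
  have hlamN : ∀ u u', u ≤ u' → u' < r → (extN r lam) u' ≤ (extN r lam) u := extN_anti r lam hlam_anti
  have hmuN : ∀ u u', u ≤ u' → u' < r → (extN r mu) u' ≤ (extN r mu) u := extN_anti r mu hmu_anti
  -- the chain bound below i0
  set Br : ℕ → Prop := fun u => 0 < u ∧ (extN r lam) u ≤ (extN r mu) (u-1) with hBr
  set a := Nat.findGreatest Br i0 with ha
  have ha_le : a ≤ i0 := Nat.findGreatest_le i0
  have hchain_a : ∀ u, a ≤ u → u < i0 → (extN r mu) u < (extN r lam) (u+1) := by
    intro u hu hui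
    by_contra hcon
    push_neg at hcon
    have hbr : Br (u+1) := ⟨by omega, by simpa using hcon⟩
    exact Nat.findGreatest_is_greatest (P := Br) (n := i0) (by omega) (by omega) hbr
  have ha_break : 0 < a → (extN r lam) a ≤ (extN r mu) (a-1) := by
    intro hpos
    exact (Nat.findGreatest_of_ne_zero ha.symm (by omega)).2
  -- the chain bound above i0
  set Bad : ℕ → Prop := fun u => i0 ≤ u ∧ u + 1 < r ∧ (extN r lam) (u+1) ≤ (extN r mu) u with hBad
  set b := if h : ∃ u, Bad u then Nat.find h else r - 1 with hb
  have hi0r : i0 < r := i.isLt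
  have hb_ge : i0 ≤ b := by
    rw [hb]
    split
    · next h => exact (Nat.find_spec h).1
    · omega
  have hb_lt : b < r := by
    rw [hb]
    split
    · next h => have := (Nat.find_spec h).2.1; omega
    · omega
  have hchain_b : ∀ u, i0 ≤ u → u < b → (extN r mu) u < (extN r lam) (u+1) := by
    intro u hu hub
    by_contra hcon
    push_neg at hcon
    have hbad : Bad u := ⟨hu, by omega, hcon⟩
    rw [hb] at hub
    by_cases h : ∃ u, Bad u
    · rw [dif_pos h] at hub
      exact Nat.find_min h hub hbad
    · exact h ⟨u, hbad⟩
  have hb_break : b + 1 < r → (extN r lam) (b+1) ≤ (extN r mu) b := by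
    intro hbr
    rw [hb] at hbr ⊢
    by_cases h : ∃ u, Bad u
    · rw [dif_pos h] at hbr ⊢
      exact (Nat.find_spec h).2.2
    · rw [dif_neg h] at hbr
      omega
  -- witness facts in extN form
  have hfgN : (extN r f) i0 < (extN r g) i0 := by
    show extN r f i0 < extN r g i0
    rw [hi0, extN_coe, extN_coe]
    exact hfi
  have hmlN : (extN r mu) i0 < (extN r lam) i0 := by
    show extN r mu i0 < extN r lam i0
    rw [hi0, extN_coe, extN_coe]
    exact hmui
  -- the three zero regions
  have hZa : ∀ t j : Fin r, a ≤ (t:ℕ) → (t:ℕ) ≤ i0 → i0 ≤ (j:ℕ) → (j:ℕ) ≤ b →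
      JT (f t) (G j) ((t : ℤ) - (j : ℤ))
        ((lam t : ℤ) - (mu j : ℤ) + (j : ℤ) - (t : ℤ)) = 0 := by
    intro t j hat hti hij hjb
    have hft : (extN r f) (t:ℕ) ≤ (extN r f) i0 :=
      (chain_mono r lam mu f g hflag (t:ℕ) i0 hti hi0r
        (fun u hu hui => hchain_a u (le_trans hat hu) hui)).1
    have hgj : (extN r g) i0 ≤ (extN r g) (j:ℕ) :=
      (chain_mono r lam mu f g hflag i0 (j:ℕ) hij j.isLt
        (fun u hu hui => hchain_b u hu (by omega))).2
    have hscal : f t < G j := by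
      have h1 : (extN r f) (t:ℕ) = f t := extN_coe r f t
      have h2 : (extN r g) (j:ℕ) = g j := extN_coe r g j
      have := hGge j
      omega
    apply JT_zero_scalar _ _ _ _ hscal
    have hlamt : lam i ≤ lam t := hlam_anti t i (by simpa [hi0] using hti)
    have hmuj : mu j ≤ mu i := hmu_anti i j (by simpa [hi0] using hij)
    have : (t : ℕ) ≤ (j : ℕ) := by omega
    omega
  have hZb : ∀ t j : Fin r, a ≤ (t:ℕ) → (j:ℕ) < a →
      JT (f t) (G j) ((t : ℤ) - (j : ℤ))
        ((lam t : ℤ) - (mu j : ℤ) + (j : ℤ) - (t : ℤ)) = 0 := by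
    intro t j hat hja
    apply JT_zero_shape _ _ _ _ (by omega)
    have h1 : lam t ≤ (extN r lam) a := by
      have := hlamN a (t:ℕ) hat t.isLt
      rw [extN_coe] at this
      exact this
    have h2 : (extN r mu) (a-1) ≤ mu j := by
      have := hmuN (j:ℕ) (a-1) (by omega) (by omega)
      rw [extN_coe] at this
      exact this
    have h3 := ha_break (by omega)
    omega
  have hZc : ∀ t j : Fin r, b < (t:ℕ) → (j:ℕ) ≤ b →
      JT (f t) (G j) ((t : ℤ) - (j : ℤ))
        ((lam t : ℤ) - (mu j : ℤ) + (j : ℤ) - (t : ℤ)) = 0 := by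
    intro t j hbt hjb
    apply JT_zero_shape _ _ _ _ (by omega)
    have hbr : b + 1 < r := by have := t.isLt; omega
    have h1 : lam t ≤ (extN r lam) (b+1) := by
      have := hlamN (b+1) (t:ℕ) (by omega) t.isLt
      rw [extN_coe] at this
      exact this
    have h2 : (extN r mu) b ≤ mu j := by
      have := hmuN (j:ℕ) b (by omega) (by omega)
      rw [extN_coe] at this
      exact this
    have h3 := hb_break hbr
    omega
  -- pigeonhole
  apply det_eq_zero_of_rows_supported _
    (Finset.univ.filter (fun t : Fin r => (a ≤ (t:ℕ) ∧ (t:ℕ) ≤ i0) ∨ b < (t:ℕ)))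
    (Finset.univ.filter (fun j : Fin r => (a ≤ (j:ℕ) ∧ (j:ℕ) < i0) ∨ b < (j:ℕ)))
  · have hRows : (Finset.univ.filter (fun t : Fin r => (a ≤ (t:ℕ) ∧ (t:ℕ) ≤ i0) ∨ b < (t:ℕ)))
        = insert i (Finset.univ.filter
          (fun j : Fin r => (a ≤ (j:ℕ) ∧ (j:ℕ) < i0) ∨ b < (j:ℕ))) := by
      ext t
      simp only [Finset.mem_filter, Finset.mem_insert, Finset.mem_univ, true_and]
      have : t = i ↔ (t:ℕ) = i0 := by
        rw [hi0]
        exact ⟨fun h => by rw [h], fun h => Fin.ext h⟩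
      rw [this]
      omega
    have hnot : i ∉ (Finset.univ.filter
        (fun j : Fin r => (a ≤ (j:ℕ) ∧ (j:ℕ) < i0) ∨ b < (j:ℕ))) := by
      simp only [Finset.mem_filter, Finset.mem_univ, true_and]
      omega
    rw [hRows, Finset.card_insert_of_notMem hnot]
    omega
  · intro t ht j hj
    simp only [Finset.mem_filter, Finset.mem_univ, true_and] at ht hj
    push_neg at hj
    rw [Matrix.of_apply]
    rcases ht with ⟨hat, hti⟩ | hbt
    · rcases Nat.lt_or_ge (j:ℕ) a with hja | haj
      · exact hZb t j hat hja
      · have hij : i0 ≤ (j:ℕ) := by omega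
        exact hZa t j hat hti hij (by omega)
    · exact hZc t j hbt (by omega)

theorem finLE {r : ℕ} {a b : Fin r} (h : (a:ℕ) ≤ (b:ℕ)) : a ≤ b := h

theorem stmt16' (r : ℕ) (lam mu f g : Fin r → ℕ)
    (hlam_anti : ∀ i j : Fin r, i ≤ j → lam j ≤ lam i) (hlam_pos : ∀ i, 0 < lam i)
    (hmu_anti : ∀ i j : Fin r, i ≤ j → mu j ≤ mu i) (hmule : ∀ i, mu i ≤ lam i)
    (hf_pos : ∀ i, 0 < f i) (hg_pos : ∀ i, 0 < g i)
    (hflag : ∀ (i : Fin r) (h : (i : ℕ) + 1 < r), mu i < lam ⟨(i : ℕ) + 1, h⟩ →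
      g i ≤ g ⟨(i : ℕ) + 1, h⟩ ∧ f i ≤ f ⟨(i : ℕ) + 1, h⟩)
    (k : Fin r) (hk : 0 < (k : ℕ))
    (hg : g ⟨(k : ℕ) - 1, Nat.lt_of_le_of_lt (Nat.sub_le _ _) k.isLt⟩ = g k)
    (hmu : mu ⟨(k : ℕ) - 1, Nat.lt_of_le_of_lt (Nat.sub_le _ _) k.isLt⟩ = mu k) :
    GtildeSkew r lam mu f g = GtildeSkew r lam mu f (Function.update g k (g k + 1)) := by
  classical
  unfold GtildeSkew
  set kn := (k : ℕ) with hkn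
  set km1 : Fin r := ⟨kn - 1, Nat.lt_of_le_of_lt (Nat.sub_le _ _) k.isLt⟩ with hkm1
  have hkm1v : (km1 : ℕ) = kn - 1 := rfl
  have hkne : km1 ≠ k := by
    intro h
    have : (km1 : ℕ) = kn := by rw [h]
    omega
  set q := g k with hq
  by_cases hwit : ∃ i : Fin r, kn ≤ (i:ℕ) ∧ f i < g k ∧ (mu k : ℕ) < lam i
  · -- Case 1: both determinants vanish
    obtain ⟨i, hki, hfi, hmli⟩ := hwit
    have hgchain : g k ≤ g i := by
      have := (chain_mono r lam mu f g hflag kn (i:ℕ) hki i.isLt (fun u hu hui => by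
        have hur : u < r := by have := i.isLt; omega
        have hur1 : u + 1 < r := by have := i.isLt; omega
        show extN r mu u < extN r lam (u+1)
        unfold extN
        rw [dif_pos hur, dif_pos hur1]
        have h1 : mu ⟨u, hur⟩ ≤ mu k := hmu_anti k ⟨u, hur⟩ (finLE hu)
        have h2 : lam i ≤ lam ⟨u+1, hur1⟩ := hlam_anti ⟨u+1, hur1⟩ i (finLE (show u+1 ≤ (i:ℕ) by omega))
        omega)).2
      rw [show extN r g kn = g k from by rw [hkn]; exact extN_coe r g k,
        extN_coe r g i] at this
      exact this
    have hmui : mu i < lam i := by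
      have : mu i ≤ mu k := hmu_anti k i (finLE hki)
      omega
    rw [det_zero_of_blocked r lam mu f g g hlam_anti hmu_anti hflag (fun j => le_rfl) i
        (by omega) hmui,
      det_zero_of_blocked r lam mu f g (Function.update g k (g k + 1)) hlam_anti hmu_anti hflag
        (fun j => by
          rw [Function.update_apply]
          split
          · next h => subst h; omega
          · exact le_rfl) i (by omega) hmui]
  · -- Case 2: column operations
    push_neg at hwit
    set M : Matrix (Fin r) (Fin r) R := Matrix.of fun i j : Fin r =>
      JT (f i) (g j) ((i : ℤ) - (j : ℤ))
        ((lam i : ℤ) - (mu j : ℤ) + (j : ℤ) - (i : ℤ)) with hM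
    set colq1 : Fin r → R := fun i =>
      JT (f i) (g k + 1) ((i : ℤ) - (k : ℤ))
        ((lam i : ℤ) - (mu k : ℤ) + (k : ℤ) - (i : ℤ)) with hcolq1
    have hM' : (Matrix.of fun i j : Fin r =>
        JT (f i) (Function.update g k (g k + 1) j) ((i : ℤ) - (j : ℤ))
          ((lam i : ℤ) - (mu j : ℤ) + (j : ℤ) - (i : ℤ)))
        = M.updateCol k colq1 := by
      ext t j
      rw [Matrix.updateCol_apply, Matrix.of_apply]
      by_cases hjk : j = k
      · subst hjk
        rw [if_pos rfl, hcolq1, Function.update_self]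
      · rw [if_neg hjk, Function.update_of_ne hjk, hM, Matrix.of_apply]
    rw [hM']
    -- the defect column
    set Edef : Fin r → R := fun i =>
      JTdef q (f i) ((i : ℤ) - (kn : ℤ)) ((lam i : ℤ) - (mu k : ℤ) + (kn : ℤ) - (i : ℤ))
      with hEdef
    have hkmz : ((km1 : Fin r) : ℤ) = (kn : ℤ) - 1 := by
      have : ((km1 : Fin r) : ℕ) = kn - 1 := rfl
      omega
    have hE : ∀ i : Fin r, (1 + bR * Xv q) * colq1 i
        = (1 + bR * Xv q) * M i k - Xv q * M i km1 + Edef i := by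
      intro i
      have hstar := JT_star (f i) q ((i : ℤ) - (kn : ℤ))
        ((lam i : ℤ) - (mu k : ℤ) + (kn : ℤ) - (i : ℤ))
      have hMik : M i k = JT (f i) q ((i : ℤ) - (kn : ℤ))
          ((lam i : ℤ) - (mu k : ℤ) + (kn : ℤ) - (i : ℤ)) := by
        rw [hM, Matrix.of_apply, hq, hkn]
      have hMikm : M i km1 = JT (f i) q (((i : ℤ) - (kn : ℤ)) + 1)
          (((lam i : ℤ) - (mu k : ℤ) + (kn : ℤ) - (i : ℤ)) - 1) := by
        rw [hM, Matrix.of_apply, hg, hmu, hkmz]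
        exact congrArg₂ (JT (f i) q) (by ring) (by ring)
      rw [hMik, hMikm, hcolq1]
      rw [show ((i : ℤ) - (k : ℤ)) = ((i : ℤ) - (kn : ℤ)) from by rw [hkn],
        show ((lam i : ℤ) - (mu k : ℤ) + (k : ℤ) - (i : ℤ))
          = ((lam i : ℤ) - (mu k : ℤ) + (kn : ℤ) - (i : ℤ)) from by rw [hkn]]
      exact hstar
    -- defect vanishes away from row km1
    have hEdef_ne : ∀ i : Fin r, (i : ℕ) ≠ kn - 1 → Edef i = 0 := by
      intro i hine
      rw [hEdef]
      simp only []
      rcases Nat.lt_or_ge (i:ℕ) kn with hik | hik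
      · -- i < kn - 1
        have hik2 : (i:ℕ) < kn - 1 := by omega
        rw [JTdef, if_neg]
        push_neg
        intro _
        have h1 : mu km1 ≤ mu i := hmu_anti i km1 (finLE (by rw [hkm1v]; omega))
        have h2 : mu i ≤ lam i := hmule i
        rw [hmu] at h1
        omega
      · -- i ≥ kn
        by_cases hfq : f i < q
        · have hlamle : lam i ≤ mu k := hwit i hik hfq
          rw [JTdef]
          by_cases hm1 : ((lam i : ℤ) - (mu k : ℤ) + (kn : ℤ) - (i : ℤ)) ≤ 1
          · rw [if_pos ⟨hfq, hm1⟩]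
            rw [intChoose_eq_zero_of_lt (by omega) (by
              have := Int.self_le_toNat (1 - ((lam i : ℤ) - (mu k : ℤ) + (kn : ℤ) - (i : ℤ)))
              omega)]
            simp
          · rw [if_neg (by push_neg; intro _; omega)]
        · rw [JTdef, if_neg (by push_neg; intro h; omega)]
    -- main column operation computation
    have hcalc : (1 + bR * Xv q) * (M.updateCol k colq1).det
        = (1 + bR * Xv q) * M.det + (M.updateCol k Edef).det := by
      have hsmul : (fun i => (1 + bR * Xv q) * colq1 i) = (1 + bR * Xv q) • colq1 := rfl
      have h1 : (1 + bR * Xv q) * (M.updateCol k colq1).det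
          = (M.updateCol k ((1 + bR * Xv q) • colq1)).det :=
        (Matrix.det_updateCol_smul M k (1 + bR * Xv q) colq1).symm
      have hdecomp : (1 + bR * Xv q) • colq1
          = ((1 + bR * Xv q) • fun i => M i k)
            + (((-(Xv q)) • fun i => M i km1) + Edef) := by
        funext i
        simp only [Pi.add_apply, Pi.smul_apply, smul_eq_mul]
        rw [show (1 + bR * Xv q) * colq1 i = (1 + bR * Xv q) * colq1 i from rfl]
        rw [hE i]
        ring
      rw [h1, hdecomp, Matrix.det_updateCol_add, Matrix.det_updateCol_add,
        Matrix.det_updateCol_smul, Matrix.det_updateCol_smul,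
        Matrix.updateCol_eq_self, Matrix.det_updateCol_eq_zero hkne]
      ring
    -- the defect determinant vanishes
    have hdet0 : (M.updateCol k Edef).det = 0 := by
      by_cases hdeg : f km1 < q ∧ lam km1 = mu km1
      · -- pigeonhole on rows ≥ k
        apply det_eq_zero_of_rows_supported _
          (Finset.univ.filter (fun t : Fin r => kn ≤ (t:ℕ)))
          (Finset.univ.filter (fun j : Fin r => kn < (j:ℕ)))
        · have hRows : (Finset.univ.filter (fun t : Fin r => kn ≤ (t:ℕ)))
              = insert k (Finset.univ.filter (fun j : Fin r => kn < (j:ℕ))) := by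
            ext t
            simp only [Finset.mem_filter, Finset.mem_insert, Finset.mem_univ, true_and]
            have : t = k ↔ (t:ℕ) = kn := by
              rw [hkn]
              exact ⟨fun h => by rw [h], fun h => Fin.ext h⟩
            rw [this]
            omega
          have hnot : k ∉ (Finset.univ.filter (fun j : Fin r => kn < (j:ℕ))) := by
            simp only [Finset.mem_filter, Finset.mem_univ, true_and]
            omega
          rw [hRows, Finset.card_insert_of_notMem hnot]
          omega
        · intro t ht j hj
          simp only [Finset.mem_filter, Finset.mem_univ, true_and] at ht hj
          push_neg at hj
          rw [Matrix.updateCol_apply]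
          by_cases hjk : j = k
          · rw [if_pos hjk]
            exact hEdef_ne t (by omega)
          · rw [if_neg hjk, hM, Matrix.of_apply]
            have hjlt : (j:ℕ) < kn := by
              rcases Nat.lt_or_ge (j:ℕ) kn with h | h
              · exact h
              · exfalso
                have : (j:ℕ) = kn := by omega
                exact hjk (Fin.ext (by rw [this, hkn]))
            apply JT_zero_shape _ _ _ _ (by omega)
            have h1 : lam t ≤ lam k := hlam_anti k t (finLE ht)
            have h2 : lam k ≤ lam km1 := hlam_anti km1 k (finLE (by rw [hkm1v]; omega))
            have h3 : mu km1 ≤ mu j := hmu_anti j km1 (finLE (by rw [hkm1v]; omega))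
            have h4 := hdeg.2
            rw [hmu] at h3
            omega
      · -- the whole defect column vanishes
        apply Matrix.det_eq_zero_of_column_eq_zero k
        intro t
        rw [Matrix.updateCol_apply, if_pos rfl]
        by_cases hte : (t:ℕ) = kn - 1
        case neg => exact hEdef_ne t hte
        case pos =>
          have htkm : t = km1 := Fin.ext (by rw [hte, hkm1v])
          subst htkm
          rw [hEdef]
          simp only []
          have hcond : ¬ (f km1 < q ∧
              ((lam km1 : ℤ) - (mu k : ℤ) + (kn : ℤ) - ((km1 : Fin r) : ℤ)) ≤ 1) := by
            push_neg
            intro hflt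
            have hne : lam km1 ≠ mu km1 := fun h => hdeg ⟨hflt, h⟩
            have hle := hmule km1
            have h5 : mu km1 = mu k := hmu
            have h6 : ((km1 : Fin r) : ℤ) = (kn:ℤ) - 1 := hkmz
            omega
          rw [JTdef, if_neg hcond]
    -- conclude
    have hu := one_add_bXv_isUnit q
    have := hcalc
    rw [hdet0, add_zero] at this
    exact ((IsUnit.mul_right_inj hu).mp this).symm

theorem stmt16 (r : ℕ) (lam mu f g : Fin r → ℕ)
    (hlam_anti : ∀ i j : Fin r, i ≤ j → lam j ≤ lam i) (hlam_pos : ∀ i, 0 < lam i)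
    (hmu_anti : ∀ i j : Fin r, i ≤ j → mu j ≤ mu i) (hmule : ∀ i, mu i ≤ lam i)
    (hf_pos : ∀ i, 0 < f i) (hg_pos : ∀ i, 0 < g i)
    (hflag : ∀ (i : Fin r) (h : (i : ℕ) + 1 < r), mu i < lam ⟨(i : ℕ) + 1, h⟩ →
      g i ≤ g ⟨(i : ℕ) + 1, h⟩ ∧ f i ≤ f ⟨(i : ℕ) + 1, h⟩)
    (k : Fin r) (hk : 0 < (k : ℕ))
    (hg : g ⟨(k : ℕ) - 1, Nat.lt_of_le_of_lt (Nat.sub_le _ _) k.isLt⟩ = g k)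
    (hmu : mu ⟨(k : ℕ) - 1, Nat.lt_of_le_of_lt (Nat.sub_le _ _) k.isLt⟩ = mu k) :
    GtildeSkew r lam mu f g = GtildeSkew r lam mu f (Function.update g k (g k + 1)) :=
  stmt16' r lam mu f g hlam_anti hlam_pos hmu_anti hmule hf_pos hg_pos hflag k hk hg hmu

end
end
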